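/- arXiv:1611.08140 — 2 statements merged into one kernel-verified Lean document; each statement's English description precedes it below -/
import Mathlib

section
/- Assume κ is strongly inaccessible. Then add(𝓜_κ) ≤ 𝔟_κ and 𝔡_κ ≤ cof(𝓜_κ). -/
namespace GenCichon

noncomputable section

open Cardinal Set Ordinal

variable (κ : Cardinal.{0})

/-- The ordinals below `κ`, i.e. the cardinal `κ` viewed as a set of ordinals. -/
abbrev Idx : Type 1 := ↥(Set.Iio κ.ord)

/-- The generalized Cantor space `2^κ`. -/
abbrev GenCantor : Type 1 := Idx κ → Bool

/-- The generalized Baire space `κ^κ`. -/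
abbrev GenBaire : Type 1 := Idx κ → Idx κ

/-- The basic open (cylinder) set `[σ]` determined by the element `σ` of `2^{<κ}`
with domain `[0, δ)` (values of `σ` at or above `δ` are irrelevant). -/
def cyl (δ : Ordinal) (σ : Ordinal → Bool) : Set (GenCantor κ) :=
  { x | ∀ β : Idx κ, β.1 < δ → x β = σ β.1 }

/-- `A ⊆ 2^κ` is nowhere dense: every basic open set `[σ]`, `σ ∈ 2^{<κ}`, has a
basic open refinement `[σ'] ⊆ [σ]` disjoint from `A`. -/
def IsNwd (A : Set (GenCantor κ)) : Prop :=
  ∀ δ < κ.ord, ∀ σ : Ordinal → Bool, ∃ δ', δ ≤ δ' ∧ δ' < κ.ord ∧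
    ∃ σ' : Ordinal → Bool, (∀ β < δ, σ' β = σ β) ∧ cyl κ δ' σ' ∩ A = ∅

/-- `A ⊆ 2^κ` is `κ`-meager: a union of `κ` many nowhere dense sets. -/
def IsKMeager (A : Set (GenCantor κ)) : Prop :=
  ∃ B : Idx κ → Set (GenCantor κ), (∀ i, IsNwd κ (B i)) ∧ A = ⋃ i, B i

/-- The covering number of the `κ`-meager ideal. -/
def covM : Cardinal.{1} :=
  sInf { c : Cardinal.{1} | ∃ J : Set (Set (GenCantor κ)),
    (∀ A ∈ J, IsKMeager κ A) ∧ ⋃₀ J = Set.univ ∧ c = #J }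

/-- The uniformity number of the `κ`-meager ideal. -/
def nonM : Cardinal.{1} :=
  sInf { c : Cardinal.{1} | ∃ X : Set (GenCantor κ), ¬ IsKMeager κ X ∧ c = #X }

/-- The additivity number of the `κ`-meager ideal. -/
def addM : Cardinal.{1} :=
  sInf { c : Cardinal.{1} | ∃ J : Set (Set (GenCantor κ)),
    (∀ A ∈ J, IsKMeager κ A) ∧ ¬ IsKMeager κ (⋃₀ J) ∧ c = #J }

/-- The cofinality number of the `κ`-meager ideal. -/
def cofM : Cardinal.{1} :=
  sInf { c : Cardinal.{1} | ∃ J : Set (Set (GenCantor κ)),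
    (∀ A ∈ J, IsKMeager κ A) ∧ (∀ A, IsKMeager κ A → ∃ B ∈ J, A ⊆ B) ∧ c = #J }

/-- `g` eventually dominates `f` (`f <* g`). -/
def EvDom (f g : GenBaire κ) : Prop :=
  ∃ α : Idx κ, ∀ β : Idx κ, α < β → f β < g β

/-- The unbounding number `𝔟_κ`. -/
def bK : Cardinal.{1} :=
  sInf { c : Cardinal.{1} | ∃ F : Set (GenBaire κ),
    (∀ g : GenBaire κ, ∃ f ∈ F, ¬ EvDom κ f g) ∧ c = #F }

/-- The dominating number `𝔡_κ`. -/
def dK : Cardinal.{1} :=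
  sInf { c : Cardinal.{1} | ∃ F : Set (GenBaire κ),
    (∀ g : GenBaire κ, ∃ f ∈ F, EvDom κ g f) ∧ c = #F }

/-- `f` and `g` are eventually different (`f ≠* g`). -/
def EvDiff (f g : GenBaire κ) : Prop :=
  #{ α : Idx κ | f α = g α } < Cardinal.lift.{1} κ

/-- `𝔟_κ(≠*)`: least size of a family such that every `g` is cofinally matching
with some member of it. -/
def bNeq : Cardinal.{1} :=
  sInf { c : Cardinal.{1} | ∃ F : Set (GenBaire κ),
    (∀ g : GenBaire κ, ∃ f ∈ F, ¬ EvDiff κ f g) ∧ c = #F }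

/-- `𝔡_κ(≠*)`: least size of a family such that every `g` is eventually different
from some member of it. -/
def dNeq : Cardinal.{1} :=
  sInf { c : Cardinal.{1} | ∃ F : Set (GenBaire κ),
    (∀ g : GenBaire κ, ∃ f ∈ F, EvDiff κ f g) ∧ c = #F }

/-- An interval partition of `κ`: a strictly increasing continuous sequence
`(pts α : α < κ)` of ordinals below `κ` with `pts 0 = 0`; the `α`-th interval is
`[pts α, pts (α+1))`.  (Values at or above `κ` are normalized to `0`, so that an
interval partition is determined by its restriction below `κ`.) -/
structure IntervalPartition where
  pts : Ordinal → Ordinal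
  zero : pts 0 = 0
  lt_ord : ∀ α < κ.ord, pts α < κ.ord
  strictMono : ∀ α β : Ordinal, α < β → β < κ.ord → pts α < pts β
  isCont : ∀ δ < κ.ord, Order.IsSuccLimit δ → pts δ = ⨆ β : ↥(Set.Iio δ), pts β.1
  eq_zero_of_le : ∀ α, κ.ord ≤ α → pts α = 0

/-- The `β`-th interval of `J` is included in the `α`-th interval of `I`. -/
def SubIntv (J : IntervalPartition κ) (β : Ordinal) (I : IntervalPartition κ)
    (α : Ordinal) : Prop :=
  I.pts α ≤ J.pts β ∧ J.pts (β + 1) ≤ I.pts (α + 1)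

/-- `I` dominates `J` (`J ≤* I`): from some point on, every interval of `I`
contains an interval of `J`. -/
def IPDom (J I : IntervalPartition κ) : Prop :=
  ∃ γ < κ.ord, ∀ α, γ < α → α < κ.ord → ∃ β < κ.ord, SubIntv κ J β I α

/-- `y` matches the `κ`-chopped function `(x, I)`: `y` and `x` agree on cofinally
many intervals of `I`. -/
def Matches (y x : GenCantor κ) (I : IntervalPartition κ) : Prop :=
  ∀ γ < κ.ord, ∃ α, γ ≤ α ∧ α < κ.ord ∧
    ∀ β : Idx κ, I.pts α ≤ β.1 → β.1 < I.pts (α + 1) → y β = x β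

/-- The set of elements of `2^κ` matching the `κ`-chopped function `(x, I)`. -/
def MatchSet (x : GenCantor κ) (I : IntervalPartition κ) : Set (GenCantor κ) :=
  { y | Matches κ y x I }

/-- `h ∈ κ^κ` tends to `κ`: `lim_{α → κ} h(α) = κ`. -/
def TendsToTop (h : GenBaire κ) : Prop :=
  ∀ γ : Idx κ, ∃ α : Idx κ, ∀ β : Idx κ, α ≤ β → γ ≤ h β

/-- `φ` is an `h`-slalom: `φ(α)` is a subset of `κ` of cardinality `|h(α)|`. -/
def IsSlalom (h : GenBaire κ) (φ : Idx κ → Set (Idx κ)) : Prop :=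
  ∀ α : Idx κ, #(φ α) = Cardinal.lift.{1} (h α).1.card

/-- The (total) slalom `φ` localizes `f` (`f ∈* φ`). -/
def Localizes (φ : Idx κ → Set (Idx κ)) (f : GenBaire κ) : Prop :=
  #{ α : Idx κ | f α ∉ φ α } < Cardinal.lift.{1} κ

/-- `𝔟_h(∈*)`. -/
def bLoc (h : GenBaire κ) : Cardinal.{1} :=
  sInf { c : Cardinal.{1} | ∃ F : Set (GenBaire κ),
    (∀ φ : Idx κ → Set (Idx κ), IsSlalom κ h φ → ∃ f ∈ F, ¬ Localizes κ φ f) ∧ c = #F }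

/-- `𝔡_h(∈*)`. -/
def dLoc (h : GenBaire κ) : Cardinal.{1} :=
  sInf { c : Cardinal.{1} | ∃ Φ : Set (Idx κ → Set (Idx κ)),
    (∀ φ ∈ Φ, IsSlalom κ h φ) ∧ (∀ f : GenBaire κ, ∃ φ ∈ Φ, Localizes κ φ f) ∧ c = #Φ }

/-- A partial `h`-slalom: a slalom whose domain is a subset of `κ` of cardinality `κ`.
(The values outside the domain are normalized to `∅`.) -/
structure PartialSlalom (h : GenBaire κ) where
  dom : Set (Idx κ)
  dom_card : #dom = Cardinal.lift.{1} κ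
  fn : Idx κ → Set (Idx κ)
  fn_card : ∀ α ∈ dom, #(fn α) = Cardinal.lift.{1} (h α).1.card
  eq_empty_of_not_mem : ∀ α ∉ dom, fn α = ∅

/-- The partial slalom `φ` localizes `f` (`f ∈* φ`). -/
def PLocalizes {h : GenBaire κ} (φ : PartialSlalom κ h) (f : GenBaire κ) : Prop :=
  #{ α : Idx κ | α ∈ φ.dom ∧ f α ∉ φ.fn α } < Cardinal.lift.{1} κ

/-- `𝔟_h(p∈*)`. -/
def bPLoc (h : GenBaire κ) : Cardinal.{1} :=
  sInf { c : Cardinal.{1} | ∃ F : Set (GenBaire κ),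
    (∀ φ : PartialSlalom κ h, ∃ f ∈ F, ¬ PLocalizes κ φ f) ∧ c = #F }

/-- `𝔡_h(p∈*)`. -/
def dPLoc (h : GenBaire κ) : Cardinal.{1} :=
  sInf { c : Cardinal.{1} | ∃ Φ : Set (PartialSlalom κ h),
    (∀ f : GenBaire κ, ∃ φ ∈ Φ, PLocalizes κ φ f) ∧ c = #Φ }

/-- `X ⊆ 2^κ` is open in the `<κ`-box topology. -/
def IsOpenK (X : Set (GenCantor κ)) : Prop :=
  ∀ x ∈ X, ∃ δ < κ.ord, { y : GenCantor κ | ∀ β : Idx κ, β.1 < δ → y β = x β } ⊆ X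

/-- `X ⊆ 2^κ` is dense: it meets every basic open set. -/
def IsDenseK (X : Set (GenCantor κ)) : Prop :=
  ∀ δ < κ.ord, ∀ σ : Ordinal → Bool, (cyl κ δ σ ∩ X).Nonempty

/-- Coordinatewise addition modulo 2 on `2^κ`. -/
def addMod2 (x y : GenCantor κ) : GenCantor κ := fun α => Bool.xor (x α) (y α)

/-- The identification of `σ ∈ 2^{<κ}` (with domain `[0, δ)`) with the element of
`2^κ` extending `σ` by `0`'s. -/
def extendZero (δ : Ordinal) (σ : Ordinal → Bool) : GenCantor κ :=
  fun α => if α.1 < δ then σ α.1 else false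

end

end GenCichon
noncomputable section Aux

open Classical in
/-- Generic transfinite "extension process". State: (current end-point, values so far). -/
noncomputable def proc (step : Ordinal.{0} → Ordinal.{0} × (Ordinal.{0} → Bool) → Ordinal.{0} × (Ordinal.{0} → Bool))
    (init : Ordinal.{0} × (Ordinal.{0} → Bool)) : Ordinal.{0} → Ordinal.{0} × (Ordinal.{0} → Bool) :=
  Ordinal.lt_wf.fix fun η IH =>
    if hη : η = 0 then init
    else if hs : ∃ η', η = η' + 1 then
      step hs.choose (IH hs.choose (by
        conv_rhs => rw [hs.choose_spec]
        rw [Ordinal.add_one_eq_succ]; exact Order.lt_succ _))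
    else
      (⨆ j : η.ToType, (IH (((Ordinal.ToType.mk (o := η))).symm j).1
          (((Ordinal.ToType.mk (o := η))).symm j).2).1,
       fun β => if h : ∃ η' : ↥(Set.Iio η), β < (IH η'.1 η'.2).1 then
          (IH h.choose.1 h.choose.2).2 β else false)

open Classical in
theorem proc_def (step) (init) (η : Ordinal.{0}) :
    proc step init η =
      if hη : η = 0 then init
      else if hs : ∃ η', η = η' + 1 then step hs.choose (proc step init hs.choose)
      else
        (⨆ j : η.ToType, (proc step init (((Ordinal.ToType.mk (o := η))).symm j).1).1,
         fun β => if h : ∃ η' : ↥(Set.Iio η), β < (proc step init η'.1).1 then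
            (proc step init h.choose.1).2 β else false) :=
  WellFounded.fix_eq _ _ _

theorem proc_zero (step) (init) : proc step init 0 = init := by
  rw [proc_def]; simp

theorem proc_succ (step) (init) (η : Ordinal.{0}) :
    proc step init (η + 1) = step η (proc step init η) := by
  rw [proc_def]
  have h1 : (η + 1 : Ordinal) ≠ 0 := by
    rw [Ordinal.add_one_eq_succ]; exact Ordinal.succ_ne_zero η
  have hs : ∃ η', η + 1 = η' + 1 := ⟨η, rfl⟩
  rw [dif_neg h1, dif_pos hs]
  have key : ∀ w : Ordinal, η + 1 = w + 1 → w = η := by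
    intro w h
    rw [Ordinal.add_one_eq_succ, Ordinal.add_one_eq_succ] at h
    exact (Order.succ_eq_succ_iff.mp h).symm
  have h2 : hs.choose = η := key _ hs.choose_spec
  rw [h2]

open Classical in
theorem proc_limit (step) (init) {η : Ordinal.{0}} (hη : Order.IsSuccLimit η) :
    proc step init η =
      (⨆ j : η.ToType, (proc step init (((Ordinal.ToType.mk (o := η))).symm j).1).1,
       fun β => if h : ∃ η' : ↥(Set.Iio η), β < (proc step init η'.1).1 then
          (proc step init h.choose.1).2 β else false) := by
  rw [proc_def, dif_neg hη.ne_zero, dif_neg]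
  rintro ⟨η', rfl⟩
  rw [Ordinal.add_one_eq_succ] at hη
  exact Order.not_isSuccLimit_succ _ hη

section ProcLemmas

variable {step : Ordinal.{0} → Ordinal.{0} × (Ordinal.{0} → Bool) → Ordinal.{0} × (Ordinal.{0} → Bool)}
variable {init : Ordinal.{0} × (Ordinal.{0} → Bool)}

theorem proc_fst_mono (hmono : ∀ η s, s.1 ≤ (step η s).1) :
    ∀ η η', η' ≤ η → (proc step init η').1 ≤ (proc step init η).1 := by
  intro η
  induction η using Ordinal.induction with
  | _ η IH =>
    intro η' hle
    rcases eq_or_lt_of_le hle with rfl | hlt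
    · exact le_rfl
    rcases Ordinal.zero_or_succ_or_isSuccLimit η with h0 | ⟨ρ, hρ⟩ | hl
    · subst h0; exact absurd hlt ((not_lt_zero (a := η')))
    · rw [← Ordinal.add_one_eq_succ] at hρ
      subst hρ
      have hη' : η' ≤ ρ := by
        rw [Ordinal.add_one_eq_succ, Order.lt_succ_iff] at hlt; exact hlt
      calc (proc step init η').1 ≤ (proc step init ρ).1 := by
            rcases eq_or_lt_of_le hη' with rfl | h
            · exact le_rfl
            · exact IH ρ (by rw [Ordinal.add_one_eq_succ]; exact Order.lt_succ _) η' hη'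
        _ ≤ (step ρ (proc step init ρ)).1 := hmono _ _
        _ = (proc step init (ρ + 1)).1 := by rw [proc_succ]
    · rw [proc_limit step init hl]
      have hlt' : η' ∈ Set.Iio η := hlt
      have := le_ciSup (Ordinal.bddAbove_range
        (fun j : η.ToType => (proc step init (((Ordinal.ToType.mk (o := η))).symm j).1).1))
        ((Ordinal.ToType.mk (o := η)) ⟨η', hlt'⟩)
      simpa using this

theorem proc_fst_strictMono (hstrict : ∀ η s, s.1 < (step η s).1) :
    ∀ η η', η' < η → (proc step init η').1 < (proc step init η).1 := by
  have hmono : ∀ η s, s.1 ≤ (step η s).1 := fun η s => (hstrict η s).le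
  intro η η' hlt
  rcases Ordinal.zero_or_succ_or_isSuccLimit η with h0 | ⟨ρ, hρ⟩ | hl
  · subst h0; exact absurd hlt ((not_lt_zero (a := η')))
  · rw [← Ordinal.add_one_eq_succ] at hρ
    subst hρ
    have hη' : η' ≤ ρ := by
      rw [Ordinal.add_one_eq_succ, Order.lt_succ_iff] at hlt; exact hlt
    calc (proc step init η').1 ≤ (proc step init ρ).1 := proc_fst_mono hmono ρ η' hη'
      _ < (step ρ (proc step init ρ)).1 := hstrict _ _
      _ = (proc step init (ρ + 1)).1 := by rw [proc_succ]
  · have h1 : η' + 1 < η := by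
      rw [Ordinal.add_one_eq_succ]; exact hl.succ_lt hlt
    calc (proc step init η').1 < (step η' (proc step init η')).1 := hstrict _ _
      _ = (proc step init (η' + 1)).1 := by rw [proc_succ]
      _ ≤ (proc step init η).1 := proc_fst_mono hmono η (η' + 1) h1.le

open Classical in
theorem proc_snd_coh (hmono : ∀ η s, s.1 ≤ (step η s).1)
    (hcoh : ∀ η s β, β < s.1 → (step η s).2 β = s.2 β) :
    ∀ η η', η' ≤ η → ∀ β, β < (proc step init η').1 →
      (proc step init η).2 β = (proc step init η').2 β := by
  intro η
  induction η using Ordinal.induction with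
  | _ η IH =>
    intro η' hle β hβ
    rcases eq_or_lt_of_le hle with rfl | hlt
    · rfl
    rcases Ordinal.zero_or_succ_or_isSuccLimit η with h0 | ⟨ρ, hρ⟩ | hl
    · subst h0; exact absurd hlt ((not_lt_zero (a := η')))
    · rw [← Ordinal.add_one_eq_succ] at hρ
      subst hρ
      have hη' : η' ≤ ρ := by
        rw [Ordinal.add_one_eq_succ, Order.lt_succ_iff] at hlt; exact hlt
      have hρlt : ρ < ρ + 1 := by
        rw [Ordinal.add_one_eq_succ]; exact Order.lt_succ _
      have hβρ : β < (proc step init ρ).1 :=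
        lt_of_lt_of_le hβ (proc_fst_mono hmono ρ η' hη')
      rw [proc_succ]
      rw [hcoh ρ _ β hβρ]
      rcases eq_or_lt_of_le hη' with rfl | h
      · rfl
      · exact IH ρ hρlt η' hη' β hβ
    · rw [proc_limit step init hl]
      have hex : ∃ η'' : ↥(Set.Iio η), β < (proc step init η''.1).1 := ⟨⟨η', hlt⟩, hβ⟩
      dsimp only
      rw [dif_pos hex]
      set c := hex.choose with hc
      have hcspec : β < (proc step init c.1).1 := hex.choose_spec
      have hm : max c.1 η' < η := max_lt c.2 hlt
      have e1 : (proc step init (max c.1 η')).2 β = (proc step init c.1).2 β :=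
        IH _ hm c.1 (le_max_left _ _) β hcspec
      have e2 : (proc step init (max c.1 η')).2 β = (proc step init η').2 β :=
        IH _ hm η' (le_max_right _ _) β hβ
      rw [← e1, e2]

theorem proc_fst_lt_ord {κ : Cardinal.{0}} (hreg : κ.IsRegular)
    (hbound : ∀ η s, s.1 < κ.ord → (step η s).1 < κ.ord) (hinit : init.1 < κ.ord) :
    ∀ η : Ordinal.{0}, η.card < κ → (proc step init η).1 < κ.ord := by
  intro η
  induction η using Ordinal.induction with
  | _ η IH =>
    intro hcard
    rcases Ordinal.zero_or_succ_or_isSuccLimit η with h0 | ⟨ρ, hρ⟩ | hl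
    · subst h0; rw [proc_zero]; exact hinit
    · rw [← Ordinal.add_one_eq_succ] at hρ
      subst hρ
      have hρlt : ρ < ρ + 1 := by rw [Ordinal.add_one_eq_succ]; exact Order.lt_succ _
      have : ρ.card < κ := lt_of_le_of_lt (Ordinal.card_le_card hρlt.le) hcard
      rw [proc_succ]
      exact hbound _ _ (IH ρ hρlt this)
    · rw [proc_limit step init hl]
      refine Ordinal.iSup_lt_ord ?_ ?_
      · rw [Cardinal.mk_toType, hreg.cof_eq]; exact hcard
      · intro j
        have hj := (((Ordinal.ToType.mk (o := η))).symm j).2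
        exact IH _ hj (lt_of_le_of_lt (Ordinal.card_le_card hj.le) hcard)

end ProcLemmas

end Aux
section Aux2

open GenCichon Cardinal Set Ordinal

theorem ord_lt_add_one (o : Ordinal.{0}) : o < o + 1 := by
  rw [Ordinal.add_one_eq_succ]; exact Order.lt_succ _

theorem ord_add_one_lt {o c : Ordinal.{0}} (hc : Order.IsSuccLimit c) (h : o < c) : o + 1 < c := by
  rw [Ordinal.add_one_eq_succ]; exact hc.succ_lt h

variable {κ : Cardinal.{0}}

variable (κ) in
/-- A good sequence: strictly monotone below `κ.ord`, with values below `κ.ord`. -/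
def GoodSeq (e : Ordinal.{0} → Ordinal.{0}) : Prop :=
  (∀ k < κ.ord, e k < κ.ord) ∧ ∀ j k : Ordinal.{0}, j < k → k < κ.ord → e j < e k

theorem GoodSeq.le_self {e : Ordinal.{0} → Ordinal.{0}} (he : GoodSeq κ e) :
    ∀ k < κ.ord, k ≤ e k := by
  intro k
  induction k using Ordinal.induction with
  | _ k IH =>
    intro hk
    by_contra hc
    push_neg at hc
    have h1 : e k ≤ e (e k) := IH (e k) hc (hc.trans hk)
    have h2 : e (e k) < e k := he.2 (e k) k hc hk
    exact absurd (h1.trans_lt h2) (lt_irrefl _)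

variable (κ) in
/-- `w` differs from `z` somewhere on every `I`-interval with index in `[γ, κ)`. -/
def nmPiece (z : GenCantor κ) (I : Ordinal.{0} → Ordinal.{0}) (γ : Idx κ) : Set (GenCantor κ) :=
  {w | ∀ k : Ordinal.{0}, γ.1 ≤ k → k < κ.ord → ∃ β : Idx κ, I k ≤ β.1 ∧ β.1 < I (k + 1) ∧ w β ≠ z β}

variable (κ) in
/-- `w` eventually differs from `z` on every `I`-interval. -/
def NonMatch (z : GenCantor κ) (I : Ordinal.{0} → Ordinal.{0}) : Set (GenCantor κ) :=
  ⋃ γ : Idx κ, nmPiece κ z I γ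

theorem nmPiece_nwd (hκ : ℵ₀ ≤ κ) (z : GenCantor κ) {I : Ordinal.{0} → Ordinal.{0}}
    (hI : GoodSeq κ I) (γ : Idx κ) : IsNwd κ (nmPiece κ z I γ) := by
  have hlim := Cardinal.isSuccLimit_ord hκ
  intro δ hδ σ
  set k := max γ.1 δ with hk
  have hkord : k < κ.ord := max_lt γ.2 hδ
  have hk1 : k + 1 < κ.ord := ord_add_one_lt hlim hkord
  have hIk : k ≤ I k := hI.le_self k hkord
  have hδIk : δ ≤ I k := le_trans (le_max_right _ _) hIk
  refine ⟨I (k + 1), le_trans hδIk (hI.2 k (k + 1) (ord_lt_add_one k) hk1).le, hI.1 _ hk1, ?_⟩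
  refine ⟨fun β => if β < δ then σ β else if h : β < κ.ord then z ⟨β, h⟩ else true,
    fun β hβ => if_pos hβ, ?_⟩
  ext w
  simp only [Set.mem_inter_iff, Set.mem_empty_iff_false, iff_false, not_and]
  intro hcyl hmem
  obtain ⟨β, hβ1, hβ2, hβ3⟩ := hmem k (le_max_left _ _) hkord
  have h4 := hcyl β hβ2
  dsimp only at h4
  rw [if_neg (not_lt.2 (le_trans hδIk hβ1)),
    dif_pos (show (β : Ordinal.{0}) < κ.ord from β.2)] at h4
  rw [Subtype.coe_eta] at h4
  exact hβ3 h4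

theorem nonMatch_meager (hκ : ℵ₀ ≤ κ) (z : GenCantor κ) {I : Ordinal.{0} → Ordinal.{0}}
    (hI : GoodSeq κ I) : IsKMeager κ (NonMatch κ z I) :=
  ⟨fun γ => nmPiece κ z I γ, fun γ => nmPiece_nwd hκ z hI γ, rfl⟩

variable (κ) in
/-- A bound for the values of `g` below `o`. -/
noncomputable def gBound (g : GenBaire κ) (o : Ordinal.{0}) : Ordinal.{0} :=
  ⨆ j : o.ToType, (fun b : ↥(Set.Iio o) =>
    if h : b.1 < κ.ord then ((g ⟨b.1, h⟩).1) + 1 else 0) (((Ordinal.ToType.mk (o := o))).symm j)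

theorem gBound_lt (hreg : κ.IsRegular) (g : GenBaire κ) {o : Ordinal.{0}} (ho : o < κ.ord) :
    gBound κ g o < κ.ord := by
  have hlim := Cardinal.isSuccLimit_ord hreg.aleph0_le
  apply Ordinal.iSup_lt_ord
  · rw [Cardinal.mk_toType, hreg.cof_eq]; exact Cardinal.lt_ord.1 ho
  · intro j
    dsimp only
    split
    · exact ord_add_one_lt hlim (Subtype.coe_prop _)
    · exact hlim.pos

theorem gBound_spec (g : GenBaire κ) {o : Ordinal.{0}} (β : Idx κ) (hβ : β.1 < o) :
    (g β).1 < gBound κ g o := by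
  have h1 := le_ciSup (Ordinal.bddAbove_range
    (fun j : o.ToType => (fun b : ↥(Set.Iio o) =>
      if h : b.1 < κ.ord then ((g ⟨b.1, h⟩).1) + 1 else 0) (((Ordinal.ToType.mk (o := o))).symm j)))
    ((Ordinal.ToType.mk (o := o)) ⟨β.1, hβ⟩)
  rw [OrderIso.symm_apply_apply] at h1
  dsimp only at h1
  rw [dif_pos (show (β : Ordinal.{0}) < κ.ord from β.2), Subtype.coe_eta] at h1
  exact lt_of_lt_of_le (ord_lt_add_one _) h1

theorem exists_partition (hreg : κ.IsRegular) (g : GenBaire κ) :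
    ∃ I : Ordinal.{0} → Ordinal.{0}, GoodSeq κ I ∧
      ∀ k < κ.ord, ∀ β : Idx κ, β.1 ≤ I k → (g β).1 < I (k + 1) := by
  have hlim := Cardinal.isSuccLimit_ord hreg.aleph0_le
  set step := fun (_ : Ordinal.{0}) (s : Ordinal.{0} × (Ordinal.{0} → Bool)) =>
    ((max (s.1 + 1) (gBound κ g (s.1 + 1)), s.2) : Ordinal.{0} × (Ordinal.{0} → Bool)) with hstep
  set I := fun k => (proc step (0, fun _ => false) k).1 with hIdef
  have hstrict : ∀ η s, s.1 < (step η s).1 := fun η s =>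
    lt_of_lt_of_le (ord_lt_add_one _) (le_max_left _ _)
  have hbound : ∀ η s, s.1 < κ.ord → (step η s).1 < κ.ord := by
    intro η s hs
    exact max_lt (ord_add_one_lt hlim hs) (gBound_lt hreg g (ord_add_one_lt hlim hs))
  refine ⟨I, ⟨?_, ?_⟩, ?_⟩
  · intro k hk
    exact proc_fst_lt_ord hreg hbound hlim.pos k (Cardinal.lt_ord.1 hk)
  · intro j k hjk _
    exact proc_fst_strictMono hstrict k j hjk
  · intro k hk β hβ
    have hsucc : I (k + 1) = max (I k + 1) (gBound κ g (I k + 1)) := by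
      simp only [hIdef, hstep]
      rw [proc_succ]
    rw [hsucc]
    exact lt_of_lt_of_le (gBound_spec g β (lt_of_le_of_lt hβ (ord_lt_add_one _)))
      (le_max_right _ _)

theorem exists_domFun (hκ : ℵ₀ ≤ κ) {e : Ordinal.{0} → Ordinal.{0}} (he : GoodSeq κ e) :
    ∃ h : GenBaire κ, ∀ (g : GenBaire κ) (I : Ordinal.{0} → Ordinal.{0}), GoodSeq κ I →
      (∀ k < κ.ord, ∀ β : Idx κ, β.1 ≤ I k → (g β).1 < I (k + 1)) →
      (∃ γ, γ < κ.ord ∧ ∀ α, γ ≤ α → α < κ.ord → ∃ k, k < κ.ord ∧ e α ≤ I k ∧ I (k + 1) ≤ e (α + 1)) →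
      EvDom κ g h := by
  have hlim := Cardinal.isSuccLimit_ord hκ
  set ν : Idx κ → Ordinal.{0} := fun β => sInf {α | α < κ.ord ∧ β.1 < e α} with hν
  have hνmem : ∀ β : Idx κ, ν β < κ.ord ∧ β.1 < e (ν β) := by
    intro β
    have hβ1 : β.1 + 1 < κ.ord := ord_add_one_lt hlim β.2
    have hne : {α | α < κ.ord ∧ β.1 < e α}.Nonempty :=
      ⟨β.1 + 1, hβ1, lt_of_lt_of_le (ord_lt_add_one β.1) (he.le_self _ hβ1)⟩
    exact csInf_mem hne
  refine ⟨fun β => ⟨e (ν β + 1), he.1 _ (ord_add_one_lt hlim (hνmem β).1)⟩, ?_⟩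
  rintro g I hI hdom ⟨γ₀, hγ₀, heng⟩
  refine ⟨⟨e γ₀, he.1 _ hγ₀⟩, ?_⟩
  intro β hβ
  have hβ1 : e γ₀ < β.1 := hβ
  have hγν : γ₀ < ν β := by
    by_contra hc
    push_neg at hc
    have h1 : e (ν β) ≤ e γ₀ := by
      rcases eq_or_lt_of_le hc with h | h
      · rw [h]
      · exact (he.2 _ _ h hγ₀).le
    exact absurd ((hνmem β).2.trans_le h1) (not_lt.2 hβ1.le)
  obtain ⟨k, hk, hek, hIk⟩ := heng (ν β) hγν.le (hνmem β).1
  have hβIk : β.1 ≤ I k := le_trans (hνmem β).2.le (le_trans ?_ hek)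
  case _ =>
    show (g β : Idx κ) < _
    have : (g β).1 < e (ν β + 1) := (hdom k hk β hβIk).trans_le hIk
    exact this
  case _ => exact le_rfl
end Aux2
section Aux3

open GenCichon Cardinal Set Ordinal

variable {κ : Cardinal.{0}}

theorem le_self_of_strict {f : Ordinal.{0} → Ordinal.{0}}
    (hf : ∀ a b : Ordinal.{0}, a < b → f a < f b) : ∀ a, a ≤ f a := by
  intro a
  induction a using Ordinal.induction with
  | _ a IH =>
    by_contra h
    push_neg at h
    exact absurd ((IH (f a) h).trans_lt (hf (f a) a h)) (lt_irrefl _)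

theorem GoodSeq.mono_le {e : Ordinal.{0} → Ordinal.{0}} (he : GoodSeq κ e)
    {a b : Ordinal.{0}} (hab : a ≤ b) (hb : b < κ.ord) : e a ≤ e b := by
  rcases eq_or_lt_of_le hab with h | h
  · rw [h]
  · exact (he.2 a b h hb).le

open Classical in
theorem engulf (hreg : κ.IsRegular) {z x : GenCantor κ} {I e : Ordinal.{0} → Ordinal.{0}}
    (hI : GoodSeq κ I) (he : GoodSeq κ e)
    (H : ∀ y : GenCantor κ, (∀ γ < κ.ord, ∃ k, γ ≤ k ∧ k < κ.ord ∧
        ∀ β : Idx κ, e k ≤ β.1 → β.1 < e (k + 1) → y β = x β) → y ∉ NonMatch κ z I) :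
    ∃ γ, γ < κ.ord ∧ ∀ α, γ ≤ α → α < κ.ord →
      ∃ k, k < κ.ord ∧ e α ≤ I k ∧ I (k + 1) ≤ e (α + 1) := by
  have hlim := Cardinal.isSuccLimit_ord hreg.aleph0_le
  by_contra hcon
  have hbad : ∀ γ, γ < κ.ord → ∃ α, γ ≤ α ∧ α < κ.ord ∧
      ∀ k, k < κ.ord → ¬(e α ≤ I k ∧ I (k + 1) ≤ e (α + 1)) := by
    intro γ hγ
    by_contra h2
    push_neg at h2
    refine hcon ⟨γ, hγ, fun α hα hα2 => ?_⟩
    obtain ⟨k, hk, hk2⟩ := h2 α hα hα2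
    exact ⟨k, hk, hk2⟩
  choose! pick hp1 hp2 hp3 using hbad
  set tstep := fun (_ : Ordinal.{0}) (s : Ordinal.{0} × (Ordinal.{0} → Bool)) =>
    ((max (s.1 + 1) (pick ((s.1 + 1) + 1)), s.2) : Ordinal.{0} × (Ordinal.{0} → Bool)) with htstep
  set t : Ordinal.{0} → Ordinal.{0} :=
    fun η => (proc tstep ((0 : Ordinal.{0}), fun _ => false) η).1 with ht
  have htstrict : ∀ η s, s.1 < (tstep η s).1 := fun η s =>
    lt_of_lt_of_le (ord_lt_add_one _) (le_max_left _ _)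
  have htbound : ∀ η s, s.1 < κ.ord → (tstep η s).1 < κ.ord := by
    intro η s hs
    have h1 : (s.1 + 1) + 1 < κ.ord := ord_add_one_lt hlim (ord_add_one_lt hlim hs)
    exact max_lt (ord_add_one_lt hlim hs) (hp2 _ h1)
  have htm : ∀ a b : Ordinal.{0}, a < b → t a < t b := fun a b hab =>
    proc_fst_strictMono htstrict b a hab
  have htle : ∀ a, a ≤ t a := le_self_of_strict htm
  have htlt : ∀ η, η < κ.ord → t η < κ.ord := fun η hη =>
    proc_fst_lt_ord hreg htbound hlim.pos η (Cardinal.lt_ord.1 hη)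
  have hts : ∀ η, η < κ.ord → t (η + 1) = pick ((t η + 1) + 1) := by
    intro η hη
    have h1 : t η < κ.ord := htlt η hη
    have h2 : (t η + 1) + 1 < κ.ord := ord_add_one_lt hlim (ord_add_one_lt hlim h1)
    have h3 : t η + 1 ≤ pick ((t η + 1) + 1) :=
      le_trans (ord_lt_add_one (t η + 1)).le (hp1 _ h2)
    simp only [ht]
    rw [proc_succ]
    simp only [htstep]
    exact max_eq_right h3
  have hgap : ∀ η₁ η₂, η₁ < κ.ord → η₂ < κ.ord → t (η₁ + 1) + 1 ≠ t (η₂ + 1) := by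
    intro η₁ η₂ h₁ h₂
    rcases lt_trichotomy η₁ η₂ with h | h | h
    · have ha : η₁ + 1 ≤ η₂ := by
        rw [Ordinal.add_one_eq_succ]; exact Order.succ_le_iff.2 h
      have hb : t (η₁ + 1) ≤ t η₂ := by
        rcases eq_or_lt_of_le ha with hh | hh
        · rw [hh]
        · exact (htm _ _ hh).le
      have hc : (t η₂ + 1) + 1 ≤ t (η₂ + 1) := by
        rw [hts η₂ h₂]
        exact hp1 _ (ord_add_one_lt hlim (ord_add_one_lt hlim (htlt η₂ h₂)))
      refine ne_of_lt ?_
      calc t (η₁ + 1) + 1 < (t (η₁ + 1) + 1) + 1 := ord_lt_add_one _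
        _ ≤ (t η₂ + 1) + 1 := add_le_add_left (add_le_add_left hb 1) 1
        _ ≤ t (η₂ + 1) := hc
    · subst h; exact (ord_lt_add_one _).ne'
    · have ha : η₂ + 1 ≤ η₁ := by
        rw [Ordinal.add_one_eq_succ]; exact Order.succ_le_iff.2 h
      have hb : t (η₂ + 1) ≤ t η₁ := by
        rcases eq_or_lt_of_le ha with hh | hh
        · rw [hh]
        · exact (htm _ _ hh).le
      have hd : t (η₂ + 1) < t (η₁ + 1) + 1 :=
        lt_of_le_of_lt hb (lt_trans (htm η₁ (η₁ + 1) (ord_lt_add_one _)) (ord_lt_add_one _))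
      exact ne_of_gt hd
  have hbadT : ∀ η, η < κ.ord →
      ∀ k, k < κ.ord → ¬(e (t (η + 1)) ≤ I k ∧ I (k + 1) ≤ e (t (η + 1) + 1)) := by
    intro η hη
    have h2 : (t η + 1) + 1 < κ.ord :=
      ord_add_one_lt hlim (ord_add_one_lt hlim (htlt η hη))
    have := hp3 _ h2
    rwa [← hts η hη] at this
  set R : Ordinal.{0} → Prop :=
    fun b => ∃ η, η < κ.ord ∧ e (t (η + 1)) ≤ b ∧ b < e (t (η + 1) + 1) with hR
  set y : GenCantor κ := fun β => if R β.1 then x β else !(z β) with hy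
  have hmatch : ∀ γ < κ.ord, ∃ k, γ ≤ k ∧ k < κ.ord ∧
      ∀ β : Idx κ, e k ≤ β.1 → β.1 < e (k + 1) → y β = x β := by
    intro γ hγ
    have hγ1 : γ + 1 < κ.ord := ord_add_one_lt hlim hγ
    refine ⟨t (γ + 1), le_trans (ord_lt_add_one γ).le (htle (γ + 1)), htlt _ hγ1, ?_⟩
    intro β h1 h2
    simp only [hy]
    rw [if_pos (show R β.1 from ⟨γ, hγ, h1, h2⟩)]
  have hymem : y ∈ NonMatch κ z I := by
    refine Set.mem_iUnion.2 ⟨⟨0, hlim.pos⟩, ?_⟩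
    intro k _ hk
    by_cases hall : ∀ β : Idx κ, I k ≤ β.1 → β.1 < I (k + 1) → R β.1
    · exfalso
      have hIk : I k < κ.ord := hI.1 k hk
      have hk1 : k + 1 < κ.ord := ord_add_one_lt hlim hk
      have hIkk : I k < I (k + 1) := hI.2 k (k + 1) (ord_lt_add_one k) hk1
      obtain ⟨η, hη, hc1, hc2⟩ := hall ⟨I k, hIk⟩ le_rfl hIkk
      have hη1 : η + 1 < κ.ord := ord_add_one_lt hlim hη
      have hu : t (η + 1) < κ.ord := htlt _ hη1
      have hu1 : t (η + 1) + 1 < κ.ord := ord_add_one_lt hlim hu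
      have hBfalse : e (t (η + 1) + 1) < I (k + 1) := by
        by_contra hB
        push_neg at hB
        exact hbadT η hη k hk ⟨hc1, hB⟩
      obtain ⟨η', hη', hd1, hd2⟩ :=
        hall ⟨e (t (η + 1) + 1), he.1 _ hu1⟩ hc2.le hBfalse
      have hη'1 : η' + 1 < κ.ord := ord_add_one_lt hlim hη'
      have hv : t (η' + 1) < κ.ord := htlt _ hη'1
      have hv1 : t (η' + 1) + 1 < κ.ord := ord_add_one_lt hlim hv
      have h5 : t (η' + 1) ≤ t (η + 1) + 1 := by
        by_contra h6
        push_neg at h6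
        exact absurd (hd1.trans_lt (he.2 _ _ h6 hv)) (lt_irrefl _)
      have h6 : t (η + 1) + 1 ≤ t (η' + 1) := by
        by_contra h7
        push_neg at h7
        have h8 : t (η' + 1) ≤ t (η + 1) := by
          have h9 := h7
          rw [Ordinal.add_one_eq_succ (t (η + 1)), Order.lt_succ_iff] at h9
          exact h9
        have h9 : e (t (η' + 1) + 1) ≤ e (t (η + 1) + 1) :=
          he.mono_le (add_le_add_left h8 1) hu1
        exact absurd (hd2.trans_le h9) (lt_irrefl _)
      exact hgap η η' hη hη' (le_antisymm h6 h5)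
    · push_neg at hall
      obtain ⟨β, hb1, hb2, hb3⟩ := hall
      refine ⟨β, hb1, hb2, ?_⟩
      simp only [hy]
      rw [if_neg hb3]
      cases z β <;> simp
  exact H y hmatch hymem

end Aux3
section Aux4

open GenCichon Cardinal Set Ordinal

variable {κ : Cardinal.{0}}

/-- Merge a stem `τ` (below `a`) with values `v` (at or above `a`). -/
noncomputable def innerσ (a : Ordinal.{0}) (τ : ↥(Set.Iio a) → Bool)
    (v : Ordinal.{0} → Bool) : Ordinal.{0} → Bool :=
  fun β => if hb : β < a then τ ⟨β, hb⟩ else v β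

variable (κ) in
/-- One step of the inner fusion recursion: refine using nowhere density of
`N` at the pair (stem, index) given by `p η`. -/
noncomputable def innerStep (N : Idx κ → Set (GenCantor κ)) (hN : ∀ i, IsNwd κ (N i))
    (a : Ordinal.{0}) (ha : a < κ.ord)
    (p : Ordinal.{0} → ((↥(Set.Iio a) → Bool) × ↥(Set.Iio a))) :
    Ordinal.{0} → (Ordinal.{0} × (Ordinal.{0} → Bool)) → (Ordinal.{0} × (Ordinal.{0} → Bool)) :=
  fun η s =>
    if h : s.1 < κ.ord then
      ((hN ⟨(p η).2.1, lt_trans (p η).2.2 ha⟩ s.1 h (innerσ a (p η).1 s.2)).choose,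
       fun β => if β < a then s.2 β else
         (hN ⟨(p η).2.1, lt_trans (p η).2.2 ha⟩ s.1 h
           (innerσ a (p η).1 s.2)).choose_spec.2.2.choose β)
    else s

section InnerStepLemmas

variable (N : Idx κ → Set (GenCantor κ)) (hN : ∀ i, IsNwd κ (N i))
    (a : Ordinal.{0}) (ha : a < κ.ord)
    (p : Ordinal.{0} → ((↥(Set.Iio a) → Bool) × ↥(Set.Iio a)))

theorem innerStep_mono : ∀ η s, s.1 ≤ (innerStep κ N hN a ha p η s).1 := by
  intro η s
  simp only [innerStep]
  split
  · exact (hN ⟨(p η).2.1, lt_trans (p η).2.2 ha⟩ s.1 ‹_› (innerσ a (p η).1 s.2)).choose_spec.1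
  · exact le_rfl

theorem innerStep_bound : ∀ η s, s.1 < κ.ord → (innerStep κ N hN a ha p η s).1 < κ.ord := by
  intro η s h
  simp only [innerStep]
  rw [dif_pos h]
  exact (hN ⟨(p η).2.1, lt_trans (p η).2.2 ha⟩ s.1 h (innerσ a (p η).1 s.2)).choose_spec.2.1

theorem innerStep_coh : ∀ η s β, β < s.1 → (innerStep κ N hN a ha p η s).2 β = s.2 β := by
  intro η s β hβ
  simp only [innerStep]
  split
  · dsimp only
    by_cases hβa : β < a
    · rw [if_pos hβa]
    · rw [if_neg hβa]
      have hσ := (hN ⟨(p η).2.1, lt_trans (p η).2.2 ha⟩ s.1 ‹_›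
        (innerσ a (p η).1 s.2)).choose_spec.2.2.choose_spec.1 β hβ
      rw [hσ, innerσ, dif_neg hβa]
  · rfl

theorem innerStep_avoid (η : Ordinal.{0}) (s : Ordinal.{0} × (Ordinal.{0} → Bool))
    (h : s.1 < κ.ord) (has : a ≤ s.1) (y : GenCantor κ)
    (h1 : ∀ b : ↥(Set.Iio a), y ⟨b.1, lt_trans b.2 ha⟩ = (p η).1 b)
    (h2 : ∀ β : Idx κ, a ≤ β.1 → β.1 < (innerStep κ N hN a ha p η s).1 →
      y β = (innerStep κ N hN a ha p η s).2 β.1) :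
    y ∉ N ⟨(p η).2.1, lt_trans (p η).2.2 ha⟩ := by
  intro hyN
  have hfst : (innerStep κ N hN a ha p η s).1 =
      (hN ⟨(p η).2.1, lt_trans (p η).2.2 ha⟩ s.1 h (innerσ a (p η).1 s.2)).choose := by
    simp only [innerStep]
    rw [dif_pos h]
  have hsnd : ∀ β, ¬(β < a) → (innerStep κ N hN a ha p η s).2 β =
      (hN ⟨(p η).2.1, lt_trans (p η).2.2 ha⟩ s.1 h
        (innerσ a (p η).1 s.2)).choose_spec.2.2.choose β := by
    intro β hβ
    simp only [innerStep]
    rw [dif_pos h]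
    dsimp only
    rw [if_neg hβ]
  have hσ := (hN ⟨(p η).2.1, lt_trans (p η).2.2 ha⟩ s.1 h
    (innerσ a (p η).1 s.2)).choose_spec.2.2.choose_spec
  have hcyl : y ∈ cyl κ
      (hN ⟨(p η).2.1, lt_trans (p η).2.2 ha⟩ s.1 h (innerσ a (p η).1 s.2)).choose
      (hN ⟨(p η).2.1, lt_trans (p η).2.2 ha⟩ s.1 h
        (innerσ a (p η).1 s.2)).choose_spec.2.2.choose := by
    intro β hβ
    by_cases hβa : β.1 < a
    · rw [hσ.1 β.1 (lt_of_lt_of_le hβa has), innerσ, dif_pos hβa]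
      have hb : (⟨(⟨β.1, hβa⟩ : ↥(Set.Iio a)).1, lt_trans (⟨β.1, hβa⟩ : ↥(Set.Iio a)).2 ha⟩ : Idx κ) = β :=
        Subtype.ext rfl
      rw [← h1 ⟨β.1, hβa⟩, hb]
    · rw [← hsnd β.1 hβa]
      exact h2 β (not_lt.1 hβa) (by rw [hfst]; exact hβ)
  have hdisj := hσ.2
  rw [Set.eq_empty_iff_forall_notMem] at hdisj
  exact hdisj y ⟨hcyl, hyN⟩

end InnerStepLemmas

theorem fusion (hin : κ.IsInaccessible) (N : Idx κ → Set (GenCantor κ))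
    (hN : ∀ i, IsNwd κ (N i)) (a : Ordinal.{0}) (ha : a < κ.ord) :
    ∃ b, a ≤ b ∧ b < κ.ord ∧ ∃ V : Ordinal.{0} → Bool,
      ∀ i : Idx κ, i.1 < a → ∀ y : GenCantor κ,
        (∀ β : Idx κ, a ≤ β.1 → β.1 < b → y β = V β.1) → y ∉ N i := by
  obtain ⟨hω, hreg, hsl⟩ := isInaccessible_def.1 hin
  have hlim := Cardinal.isSuccLimit_ord hreg.aleph0_le
  by_cases h0 : a = 0
  · exact ⟨a, le_rfl, ha, fun _ => false, fun i hi => absurd (h0 ▸ hi) not_lt_zero⟩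
  have hPne : Nonempty ((↥(Set.Iio a) → Bool) × ↥(Set.Iio a)) :=
    ⟨fun _ => false, ⟨0, pos_iff_ne_zero.2 h0⟩⟩
  set c : Cardinal.{0} := (2 ^ a.card) * a.card with hc
  have hclt : c < κ :=
    Cardinal.mul_lt_of_lt hreg.aleph0_le (hsl.two_power_lt (Cardinal.lt_ord.1 ha))
      (Cardinal.lt_ord.1 ha)
  have hcard : #(↥(Set.Iio c.ord)) = #((↥(Set.Iio a) → Bool) × ↥(Set.Iio a)) := by
    rw [Ordinal.mk_Iio_ordinal, Cardinal.card_ord, Cardinal.mk_prod, Cardinal.mk_arrow,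
      Ordinal.mk_Iio_ordinal, Cardinal.mk_bool, hc]
    simp [Cardinal.lift_mul, Cardinal.lift_power, Cardinal.lift_id]
  obtain ⟨p0⟩ := Cardinal.eq.1 hcard
  set p : Ordinal.{0} → ((↥(Set.Iio a) → Bool) × ↥(Set.Iio a)) :=
    fun η => if h : η < c.ord then p0 ⟨η, h⟩ else Classical.choice hPne with hp
  set F := proc (innerStep κ N hN a ha p) ((a, fun _ => false)) with hF
  have hmono := innerStep_mono N hN a ha p
  have hbound := innerStep_bound N hN a ha p
  have hcoh := innerStep_coh N hN a ha p
  have hstage_a : ∀ η, a ≤ (F η).1 := by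
    intro η
    have h1 := proc_fst_mono (step := innerStep κ N hN a ha p)
      (init := ((a : Ordinal.{0}), fun _ => false)) hmono η 0 zero_le
    rw [proc_zero] at h1
    rw [hF]
    exact h1
  have hstage_lt : ∀ η : Ordinal.{0}, η.card < κ → (F η).1 < κ.ord := fun η hη =>
    proc_fst_lt_ord hreg hbound ha η hη
  refine ⟨(F c.ord).1, hstage_a c.ord, hstage_lt c.ord (by rw [Cardinal.card_ord]; exact hclt),
    (F c.ord).2, ?_⟩
  intro i hi y hy hyN
  set τ : ↥(Set.Iio a) → Bool := fun bβ => y ⟨bβ.1, lt_trans bβ.2 ha⟩ with hτ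
  set pr : ((↥(Set.Iio a) → Bool) × ↥(Set.Iio a)) := (τ, ⟨i.1, hi⟩) with hpr
  set η₀ : ↥(Set.Iio c.ord) := p0.symm pr with hη₀
  have hplt : p η₀.1 = pr := by
    rw [hp]
    dsimp only
    rw [dif_pos (show (η₀ : Ordinal.{0}) < c.ord from η₀.2), Subtype.coe_eta, hη₀,
      Equiv.apply_symm_apply]
  have hcardη : (η₀.1).card < κ :=
    lt_of_le_of_lt (Ordinal.card_le_card η₀.2.le) (by rw [Cardinal.card_ord]; exact hclt)
  have hslt : (F η₀.1).1 < κ.ord := hstage_lt η₀.1 hcardη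
  have hsucc_le : η₀.1 + 1 ≤ c.ord := by
    rw [Ordinal.add_one_eq_succ]
    exact Order.succ_le_iff.2 η₀.2
  have hstage : F (η₀.1 + 1) = innerStep κ N hN a ha p η₀.1 (F η₀.1) := by
    rw [hF]; exact proc_succ _ _ _
  have havoid := innerStep_avoid N hN a ha p η₀.1 (F η₀.1) hslt (hstage_a η₀.1) y ?_ ?_
  · have hieq : (⟨(p η₀.1).2.1, lt_trans (p η₀.1).2.2 ha⟩ : Idx κ) = i := by
      refine Subtype.ext ?_
      show (p η₀.1).2.1 = i.1
      rw [hplt]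
    rw [hieq] at havoid
    exact havoid hyN
  · intro b
    rw [hplt]
  · intro β hβ1 hβ2
    rw [← hstage] at hβ2 ⊢
    have hb : β.1 < (F c.ord).1 :=
      lt_of_lt_of_le hβ2 (proc_fst_mono hmono c.ord (η₀.1 + 1) hsucc_le)
    rw [hy β hβ1 hb]
    have := proc_snd_coh hmono hcoh c.ord (η₀.1 + 1) hsucc_le β.1 hβ2
    rw [hF]
    exact this
end Aux4
section Aux5

open GenCichon Cardinal Set Ordinal

variable {κ : Cardinal.{0}}

noncomputable def fusB (hin : κ.IsInaccessible) (N : Idx κ → Set (GenCantor κ))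
    (hN : ∀ i, IsNwd κ (N i)) (a : Ordinal.{0}) : Ordinal.{0} :=
  if ha : a < κ.ord then (fusion hin N hN a ha).choose else a

noncomputable def fusV (hin : κ.IsInaccessible) (N : Idx κ → Set (GenCantor κ))
    (hN : ∀ i, IsNwd κ (N i)) (a : Ordinal.{0}) : Ordinal.{0} → Bool :=
  if ha : a < κ.ord then (fusion hin N hN a ha).choose_spec.2.2.choose else fun _ => false

theorem fusB_ge (hin : κ.IsInaccessible) (N : Idx κ → Set (GenCantor κ))
    (hN : ∀ i, IsNwd κ (N i)) (a : Ordinal.{0}) : a ≤ fusB hin N hN a := by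
  simp only [fusB]
  split
  · exact (fusion hin N hN a ‹_›).choose_spec.1
  · exact le_rfl

theorem fusB_lt (hin : κ.IsInaccessible) (N : Idx κ → Set (GenCantor κ))
    (hN : ∀ i, IsNwd κ (N i)) {a : Ordinal.{0}} (ha : a < κ.ord) :
    fusB hin N hN a < κ.ord := by
  simp only [fusB]
  rw [dif_pos ha]
  exact (fusion hin N hN a ha).choose_spec.2.1

theorem fus_guar (hin : κ.IsInaccessible) (N : Idx κ → Set (GenCantor κ))
    (hN : ∀ i, IsNwd κ (N i)) {a : Ordinal.{0}} (ha : a < κ.ord) :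
    ∀ i : Idx κ, i.1 < a → ∀ y : GenCantor κ,
      (∀ β : Idx κ, a ≤ β.1 → β.1 < fusB hin N hN a → y β = fusV hin N hN a β.1) →
      y ∉ N i := by
  have h1 := (fusion hin N hN a ha).choose_spec.2.2.choose_spec
  intro i hi y hy
  refine h1 i hi y ?_
  intro β hb1 hb2
  have e1 : fusB hin N hN a = (fusion hin N hN a ha).choose := by
    simp only [fusB]; rw [dif_pos ha]
  have e2 : fusV hin N hN a = (fusion hin N hN a ha).choose_spec.2.2.choose := by
    simp only [fusV]; rw [dif_pos ha]
  rw [← e2]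
  exact hy β hb1 (by rw [e1]; exact hb2)

noncomputable def outerStep (hin : κ.IsInaccessible) (N : Idx κ → Set (GenCantor κ))
    (hN : ∀ i, IsNwd κ (N i)) :
    Ordinal.{0} → (Ordinal.{0} × (Ordinal.{0} → Bool)) → (Ordinal.{0} × (Ordinal.{0} → Bool)) :=
  fun _ s => (fusB hin N hN s.1 + 1, fun β => if β < s.1 then s.2 β else fusV hin N hN s.1 β)

noncomputable def outerG (hin : κ.IsInaccessible) (N : Idx κ → Set (GenCantor κ))
    (hN : ∀ i, IsNwd κ (N i)) : Ordinal.{0} → Ordinal.{0} × (Ordinal.{0} → Bool) :=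
  proc (outerStep hin N hN) ((0 : Ordinal.{0}), fun _ => false)

noncomputable def outerE (hin : κ.IsInaccessible) (N : Idx κ → Set (GenCantor κ))
    (hN : ∀ i, IsNwd κ (N i)) : Ordinal.{0} → Ordinal.{0} :=
  fun k => (outerG hin N hN k).1

noncomputable def outerX (hin : κ.IsInaccessible) (N : Idx κ → Set (GenCantor κ))
    (hN : ∀ i, IsNwd κ (N i)) : GenCantor κ :=
  fun β => (outerG hin N hN κ.ord).2 β.1

section OuterLemmas

variable (hin : κ.IsInaccessible) (N : Idx κ → Set (GenCantor κ)) (hN : ∀ i, IsNwd κ (N i))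

theorem outerStep_strict : ∀ η s, s.1 < (outerStep hin N hN η s).1 := fun η s =>
  lt_of_le_of_lt (fusB_ge hin N hN s.1) (ord_lt_add_one _)

theorem outerStep_bound : ∀ η s, s.1 < κ.ord → (outerStep hin N hN η s).1 < κ.ord := by
  intro η s hs
  exact ord_add_one_lt (Cardinal.isSuccLimit_ord hin.isRegular.aleph0_le) (fusB_lt hin N hN hs)

theorem outerStep_coh : ∀ η s β, β < s.1 → (outerStep hin N hN η s).2 β = s.2 β := by
  intro η s β hβ
  show (if β < s.1 then s.2 β else _) = s.2 β
  rw [if_pos hβ]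

theorem outerG_succ (k : Ordinal.{0}) :
    outerG hin N hN (k + 1) = outerStep hin N hN k (outerG hin N hN k) := by
  unfold outerG
  exact proc_succ _ _ _

theorem outerE_succ (k : Ordinal.{0}) :
    outerE hin N hN (k + 1) = fusB hin N hN (outerE hin N hN k) + 1 := by
  unfold outerE
  rw [outerG_succ]
  rfl

theorem outerE_good : GoodSeq κ (outerE hin N hN) := by
  constructor
  · intro k hk
    exact proc_fst_lt_ord hin.isRegular (outerStep_bound hin N hN)
      (Cardinal.isSuccLimit_ord hin.isRegular.aleph0_le).pos k (Cardinal.lt_ord.1 hk)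
  · intro j k hjk _
    exact proc_fst_strictMono (outerStep_strict hin N hN) k j hjk

theorem outer (hin : κ.IsInaccessible) (N : Idx κ → Set (GenCantor κ))
    (hN : ∀ i, IsNwd κ (N i)) :
    ∀ y : GenCantor κ, (∀ γ < κ.ord, ∃ k, γ ≤ k ∧ k < κ.ord ∧
      ∀ β : Idx κ, outerE hin N hN k ≤ β.1 → β.1 < outerE hin N hN (k + 1) →
        y β = outerX hin N hN β) →
    ∀ i, y ∉ N i := by
  have hreg := hin.isRegular
  have hlim := Cardinal.isSuccLimit_ord hreg.aleph0_le
  have hmono : ∀ η s, s.1 ≤ (outerStep hin N hN η s).1 := fun η s =>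
    (outerStep_strict hin N hN η s).le
  have heself : ∀ k, k ≤ outerE hin N hN k :=
    le_self_of_strict (fun a b hab => proc_fst_strictMono (outerStep_strict hin N hN) b a hab)
  intro y hy i
  obtain ⟨k, hk1, hk2, hmatch⟩ := hy (i.1 + 1) (ord_add_one_lt hlim i.2)
  have hek : outerE hin N hN k < κ.ord := (outerE_good hin N hN).1 k hk2
  have hia : i.1 < outerE hin N hN k :=
    lt_of_lt_of_le (lt_of_lt_of_le (ord_lt_add_one i.1) hk1) (heself k)
  have hk1' : k + 1 ≤ κ.ord := (ord_add_one_lt hlim hk2).le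
  refine fus_guar hin N hN hek i hia y ?_
  intro β hb1 hb2
  have hb2' : β.1 < outerE hin N hN (k + 1) := by
    rw [outerE_succ]
    exact lt_trans hb2 (ord_lt_add_one _)
  rw [hmatch β hb1 hb2']
  have hc2 := proc_snd_coh (init := ((0 : Ordinal.{0}), fun _ => false)) hmono
    (outerStep_coh hin N hN) κ.ord (k + 1) hk1' β.1 hb2'
  show (outerG hin N hN κ.ord).2 β.1 = _
  rw [show (outerG hin N hN κ.ord).2 β.1 = (outerG hin N hN (k + 1)).2 β.1 from hc2]
  rw [outerG_succ]
  show (if β.1 < outerE hin N hN k then _ else fusV hin N hN (outerE hin N hN k) β.1) = _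
  rw [if_neg (not_lt.2 hb1)]

end OuterLemmas

end Aux5
section Aux6

open GenCichon Cardinal Set Ordinal

variable {κ : Cardinal.{0}}

theorem exists_h_of_meager (hin : κ.IsInaccessible) (B : Set (GenCantor κ))
    (hB : IsKMeager κ B) :
    ∃ h : GenBaire κ, ∀ (g : GenBaire κ) (I : Ordinal.{0} → Ordinal.{0}), GoodSeq κ I →
      (∀ k < κ.ord, ∀ β : Idx κ, β.1 ≤ I k → (g β).1 < I (k + 1)) →
      NonMatch κ (fun _ => true) I ⊆ B → EvDom κ g h := by
  obtain ⟨Bfam, hnw, hBeq⟩ := hB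
  obtain ⟨h, hh⟩ := exists_domFun hin.isRegular.aleph0_le (outerE_good hin Bfam hnw)
  refine ⟨h, ?_⟩
  intro g I hI hd hsub
  refine hh g I hI hd ?_
  refine engulf (z := fun _ => true) (x := outerX hin Bfam hnw) hin.isRegular hI
    (outerE_good hin Bfam hnw) ?_
  intro y hy hymem
  have h2 := outer hin Bfam hnw y hy
  have h3 : y ∈ B := hsub hymem
  rw [hBeq, Set.mem_iUnion] at h3
  obtain ⟨i, hi⟩ := h3
  exact h2 i hi

end Aux6

namespace GenCichon

open Cardinal Set Ordinal


theorem addM_le_bK_and_dK_le_cofM (κ : Cardinal.{0}) (hinacc : κ.IsInaccessible) :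
    addM κ ≤ bK κ ∧ dK κ ≤ cofM κ := by
  classical
  have hreg := hinacc.isRegular
  have hlim := Cardinal.isSuccLimit_ord hreg.aleph0_le
  constructor
  · show addM κ ≤ sInf _
    refine le_csInf ?_ ?_
    · refine ⟨#(Set.univ : Set (GenBaire κ)), Set.univ, ?_, rfl⟩
      intro g
      refine ⟨g, Set.mem_univ g, ?_⟩
      rintro ⟨α, hα⟩
      have hα1 : α.1 + 1 < κ.ord := ord_add_one_lt hlim α.2
      have hlt : α < (⟨α.1 + 1, hα1⟩ : Idx κ) := by
        rw [← Subtype.coe_lt_coe]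
        exact ord_lt_add_one α.1
      exact absurd (hα ⟨α.1 + 1, hα1⟩ hlt) (lt_irrefl _)
    · rintro c ⟨F, hF, rfl⟩
      have hpart := fun f : GenBaire κ => exists_partition hreg f
      set If : GenBaire κ → (Ordinal.{0} → Ordinal.{0}) := fun f => (hpart f).choose with hIf
      set J : Set (Set (GenCantor κ)) :=
        (fun f => NonMatch κ (fun _ => true) (If f)) '' F with hJ
      have hJmeager : ∀ A ∈ J, IsKMeager κ A := by
        rintro A ⟨f, hf, rfl⟩
        exact nonMatch_meager hreg.aleph0_le _ (hpart f).choose_spec.1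
      have hJnot : ¬ IsKMeager κ (⋃₀ J) := by
        rintro ⟨Bfam, hnw, hBeq⟩
        obtain ⟨h, hh⟩ := exists_domFun hreg.aleph0_le (outerE_good hinacc Bfam hnw)
        obtain ⟨f, hfF, hfnd⟩ := hF h
        refine hfnd (hh f (If f) (hpart f).choose_spec.1 (hpart f).choose_spec.2 ?_)
        refine engulf (z := fun _ => true) (x := outerX hinacc Bfam hnw) hreg
          (hpart f).choose_spec.1 (outerE_good hinacc Bfam hnw) ?_
        intro y hy hymem
        have h2 := outer hinacc Bfam hnw y hy
        have h3 : y ∈ ⋃₀ J := ⟨_, ⟨f, hfF, rfl⟩, hymem⟩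
        rw [hBeq, Set.mem_iUnion] at h3
        obtain ⟨i, hi⟩ := h3
        exact h2 i hi
      have hmem : #↥J ∈ {c : Cardinal.{1} | ∃ J' : Set (Set (GenCantor κ)),
          (∀ A ∈ J', IsKMeager κ A) ∧ ¬ IsKMeager κ (⋃₀ J') ∧ c = #↥J'} :=
        ⟨J, hJmeager, hJnot, rfl⟩
      exact le_trans (csInf_le' hmem) Cardinal.mk_image_le
  · show dK κ ≤ sInf _
    refine le_csInf ?_ ?_
    · refine ⟨#↥({A | IsKMeager κ A} : Set (Set (GenCantor κ))), {A | IsKMeager κ A},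
        fun A hA => hA, fun A hA => ⟨A, hA, subset_rfl⟩, rfl⟩
    · rintro c ⟨J, hJm, hJcof, rfl⟩
      set hfun : Set (GenCantor κ) → GenBaire κ := fun B =>
        if hB : IsKMeager κ B then (exists_h_of_meager hinacc B hB).choose
        else (fun β => β) with hhfun
      have hdomi : ∀ g : GenBaire κ, ∃ f ∈ hfun '' J, EvDom κ g f := by
        intro g
        obtain ⟨I, hI, hId⟩ := exists_partition hreg g
        obtain ⟨B, hBJ, hsub⟩ := hJcof (NonMatch κ (fun _ => true) I)
          (nonMatch_meager hreg.aleph0_le _ hI)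
        have hBme : IsKMeager κ B := hJm B hBJ
        refine ⟨hfun B, ⟨B, hBJ, rfl⟩, ?_⟩
        have e1 : hfun B = (exists_h_of_meager hinacc B hBme).choose := by
          simp only [hhfun]
          rw [dif_pos hBme]
        rw [e1]
        exact (exists_h_of_meager hinacc B hBme).choose_spec g I hI hId hsub
      have hmem : #↥(hfun '' J) ∈ {c : Cardinal.{1} | ∃ F : Set (GenBaire κ),
          (∀ g : GenBaire κ, ∃ f ∈ F, EvDom κ g f) ∧ c = #↥F} :=
        ⟨hfun '' J, hdomi, rfl⟩
      exact le_trans (csInf_le' hmem) Cardinal.mk_image_le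

end GenCichon
end

section
/- Let κ be an uncountable regular cardinal. Then add(𝓜_κ) ≥ min{𝔟_κ, cov(𝓜_κ)}. -/
namespace GenCichon

open Cardinal Set Ordinal

section Helpers

variable {κ : Cardinal.{0}}

lemma kord_limit (hunc : Cardinal.aleph0 < κ) : Order.IsSuccLimit κ.ord :=
  Cardinal.isSuccLimit_ord hunc.le

lemma succ_lt_kord (hunc : Cardinal.aleph0 < κ) {a : Ordinal} (h : a < κ.ord) :
    a + 1 < κ.ord := by
  rw [Ordinal.add_one_eq_succ]
  exact (kord_limit hunc).succ_lt h

lemma zero_lt_kord (hunc : Cardinal.aleph0 < κ) : (0 : Ordinal) < κ.ord :=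
  (kord_limit hunc).bot_lt

lemma add_lt_kord (hunc : Cardinal.aleph0 < κ) {a b : Ordinal}
    (ha : a < κ.ord) (hb : b < κ.ord) : a + b < κ.ord := by
  rw [Cardinal.lt_ord] at ha hb ⊢
  rw [Ordinal.card_add]
  exact Cardinal.add_lt_of_lt hunc.le ha hb

lemma mul_lt_kord (hunc : Cardinal.aleph0 < κ) {a b : Ordinal}
    (ha : a < κ.ord) (hb : b < κ.ord) : a * b < κ.ord := by
  rw [Cardinal.lt_ord] at ha hb ⊢
  rw [Ordinal.card_mul]
  exact Cardinal.mul_lt_of_lt hunc.le ha hb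

lemma idx_nonempty (hunc : Cardinal.aleph0 < κ) : Nonempty (Idx κ) :=
  ⟨⟨0, zero_lt_kord hunc⟩⟩

lemma mk_idx : #(Idx κ) = Cardinal.lift.{1} κ := by
  rw [show (Idx κ) = ↥(Set.Iio κ.ord) from rfl, Ordinal.mk_Iio_ordinal, Cardinal.card_ord]

lemma aleph0_le_lift_k (hunc : Cardinal.aleph0 < κ) :
    Cardinal.aleph0 ≤ Cardinal.lift.{1} κ := by
  have := Cardinal.lift_le.{1}.mpr hunc.le
  simpa using this

lemma cyl_mono {δ δ' : Ordinal} (h : δ ≤ δ') (σ : Ordinal → Bool) :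
    cyl κ δ' σ ⊆ cyl κ δ σ := fun x hx β hβ => hx β (lt_of_lt_of_le hβ h)

lemma cyl_congr {δ : Ordinal} {σ τ : Ordinal → Bool} (h : ∀ β < δ, σ β = τ β) :
    cyl κ δ σ = cyl κ δ τ := by
  ext x
  constructor <;> intro hx β hβ
  · rw [hx β hβ, h β.1 hβ]
  · rw [hx β hβ, h β.1 hβ]

lemma nwd_mono {A B : Set (GenCantor κ)} (hAB : A ⊆ B) (h : IsNwd κ B) : IsNwd κ A := by
  intro δ hδ σ
  obtain ⟨δ', h1, h2, σ', h3, h4⟩ := h δ hδ σ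
  exact ⟨δ', h1, h2, σ', h3, Set.eq_empty_of_subset_empty
    (h4 ▸ Set.inter_subset_inter_right _ hAB)⟩

lemma nwd_empty : IsNwd κ (∅ : Set (GenCantor κ)) := by
  intro δ hδ σ
  exact ⟨δ, le_rfl, hδ, σ, fun _ _ => rfl, by simp⟩

lemma nwd_meager (hunc : Cardinal.aleph0 < κ) {A : Set (GenCantor κ)}
    (h : IsNwd κ A) : IsKMeager κ A := by
  have := idx_nonempty (κ := κ) hunc
  exact ⟨fun _ => A, fun _ => h, (Set.iUnion_const A).symm⟩

lemma ord_lt_add_one (a : Ordinal) : a < a + 1 := by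
  rw [Ordinal.add_one_eq_succ]; exact Order.lt_succ a

lemma nwd_singleton (hunc : Cardinal.aleph0 < κ) (x : GenCantor κ) :
    IsNwd κ ({x} : Set (GenCantor κ)) := by
  intro δ hδ σ
  refine ⟨δ + 1, le_of_lt (ord_lt_add_one δ), succ_lt_kord hunc hδ,
    fun β => if β = δ then !(x ⟨δ, hδ⟩) else σ β, fun β hβ => if_neg hβ.ne, ?_⟩
  ext y
  simp only [Set.mem_inter_iff, Set.mem_singleton_iff, Set.mem_empty_iff_false, iff_false,
    not_and]
  intro hy hyx
  subst hyx
  have := hy ⟨δ, hδ⟩ (ord_lt_add_one δ)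
  simp at this
lemma meager_mono {A B : Set (GenCantor κ)} (hAB : A ⊆ B) (h : IsKMeager κ B) :
    IsKMeager κ A := by
  obtain ⟨C, hC, hBeq⟩ := h
  refine ⟨fun i => C i ∩ A, fun i => nwd_mono Set.inter_subset_left (hC i), ?_⟩
  rw [← Set.iUnion_inter, ← hBeq, Set.inter_eq_right.mpr hAB]

lemma idx_pair_equiv (hunc : Cardinal.aleph0 < κ) :
    Nonempty (Idx κ × Idx κ ≃ Idx κ) := by
  apply Cardinal.eq.mp
  rw [Cardinal.mk_prod, mk_idx, Cardinal.lift_id, Cardinal.mul_eq_self (aleph0_le_lift_k hunc)]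

lemma meager_of_subset_iUnion (hunc : Cardinal.aleph0 < κ) {S : Set (GenCantor κ)}
    {E : Idx κ × Idx κ → Set (GenCantor κ)} (hE : ∀ p, IsNwd κ (E p))
    (hcov : S ⊆ ⋃ p, E p) : IsKMeager κ S := by
  obtain ⟨e⟩ := idx_pair_equiv hunc
  refine ⟨fun i => E (e.symm i) ∩ S, fun i => nwd_mono Set.inter_subset_left (hE _), ?_⟩
  ext y
  simp only [Set.mem_iUnion, Set.mem_inter_iff]
  constructor
  · intro hy
    obtain ⟨p, hp⟩ := Set.mem_iUnion.mp (hcov hy)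
    exact ⟨e p, by simpa using hp, hy⟩
  · rintro ⟨_, _, hy⟩
    exact hy

lemma meager_sUnion_small (hunc : Cardinal.aleph0 < κ)
    {J : Set (Set (GenCantor κ))} (hJ : ∀ A ∈ J, IsKMeager κ A)
    (hcard : #J ≤ Cardinal.lift.{1} κ) : IsKMeager κ (⋃₀ J) := by
  classical
  rcases Set.eq_empty_or_nonempty J with rfl | hne
  · rw [Set.sUnion_empty]
    exact nwd_meager hunc nwd_empty
  have hJ' : ∀ s : ↥J, IsKMeager κ s.1 := fun s => hJ s.1 s.2
  choose N hNnwd hNeq using hJ'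
  obtain ⟨g⟩ : Nonempty (↥J ↪ Idx κ) := by
    rw [← Cardinal.le_def, mk_idx]
    exact hcard
  have hne' : Nonempty ↥J := hne.to_subtype
  let u : Idx κ → ↥J := Function.invFun g
  have hu : ∀ s : ↥J, u (g s) = s := Function.leftInverse_invFun g.injective
  refine meager_of_subset_iUnion hunc (E := fun p => N (u p.1) p.2)
    (fun p => hNnwd _ _) ?_
  rintro y ⟨A, hAJ, hyA⟩
  have : y ∈ ⋃ i, N ⟨A, hAJ⟩ i := by rw [← hNeq ⟨A, hAJ⟩]; exact hyA
  obtain ⟨i, hi⟩ := Set.mem_iUnion.mp this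
  apply Set.mem_iUnion.mpr ⟨(g ⟨A, hAJ⟩, i), ?_⟩
  rw [hu ⟨A, hAJ⟩]
  exact hi
open scoped Classical in
/-- Extend the condition `(δ, σ)` to one whose cylinder misses `N` (when possible). -/
noncomputable def kill (κ : Cardinal.{0}) (N : Set (GenCantor κ)) (δ : Ordinal)
    (σ : Ordinal → Bool) : Ordinal × (Ordinal → Bool) :=
  if h : IsNwd κ N ∧ δ < κ.ord then
    ⟨(h.1 δ h.2 σ).choose, ((h.1 δ h.2 σ).choose_spec.2.2).choose⟩
  else (δ, σ)

lemma kill_spec {N : Set (GenCantor κ)} (hN : IsNwd κ N) {δ : Ordinal} (hδ : δ < κ.ord)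
    (σ : Ordinal → Bool) :
    δ ≤ (kill κ N δ σ).1 ∧ (kill κ N δ σ).1 < κ.ord ∧
    (∀ β < δ, (kill κ N δ σ).2 β = σ β) ∧
    cyl κ (kill κ N δ σ).1 (kill κ N δ σ).2 ∩ N = ∅ := by
  rw [kill, dif_pos (⟨hN, hδ⟩ : IsNwd κ N ∧ δ < κ.ord)]
  have h1 := (hN δ hδ σ).choose_spec
  have h2 := (h1.2.2).choose_spec
  exact ⟨h1.1, h1.2.1, h2.1, h2.2⟩

open scoped Classical in
noncomputable def bctF (κ : Cardinal.{0}) (B : Idx κ → Set (GenCantor κ)) (i : Ordinal)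
    (rec : ∀ j, j < i → Ordinal × (Ordinal → Bool)) : Ordinal × (Ordinal → Bool) :=
  let d := Ordinal.bsup i (fun j hj => (rec j hj).1)
  let s : Ordinal → Bool := fun β =>
    if h : ∃ j : ↥(Set.Iio i), β < (rec j.1 j.2).1 then (rec h.choose.1 h.choose.2).2 β
    else false
  if hi : i < κ.ord then
    (max (kill κ (B ⟨i, hi⟩) d s).1 (i + 1), (kill κ (B ⟨i, hi⟩) d s).2)
  else (0, fun _ => false)

noncomputable def bctSeq (κ : Cardinal.{0}) (B : Idx κ → Set (GenCantor κ)) :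
    Ordinal → Ordinal × (Ordinal → Bool) :=
  WellFounded.fix Ordinal.lt_wf (bctF κ B)

lemma bctSeq_eq (B : Idx κ → Set (GenCantor κ)) (i : Ordinal) :
    bctSeq κ B i = bctF κ B i (fun j _ => bctSeq κ B j) :=
  WellFounded.fix_eq _ _ _

/-- The invariants of the Baire-category construction. -/
def BctInv (κ : Cardinal.{0}) (B : Idx κ → Set (GenCantor κ)) (i : Ordinal) : Prop :=
  (bctSeq κ B i).1 < κ.ord ∧ i < (bctSeq κ B i).1 ∧
  (∀ j, j < i → (bctSeq κ B j).1 ≤ (bctSeq κ B i).1 ∧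
    ∀ β, β < (bctSeq κ B j).1 → (bctSeq κ B i).2 β = (bctSeq κ B j).2 β) ∧
  ∀ hi : i < κ.ord, cyl κ (bctSeq κ B i).1 (bctSeq κ B i).2 ∩ B ⟨i, hi⟩ = ∅

lemma bct_inv (hreg : κ.IsRegular) (hunc : Cardinal.aleph0 < κ)
    {B : Idx κ → Set (GenCantor κ)} (hB : ∀ i, IsNwd κ (B i)) :
    ∀ i < κ.ord, BctInv κ B i := by
  classical
  intro i
  induction i using Ordinal.induction with
  | h i IH =>
    intro hi
    set d := Ordinal.bsup i (fun j (_ : j < i) => (bctSeq κ B j).1) with hd_def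
    set s : Ordinal → Bool := fun β =>
      if h : ∃ j : ↥(Set.Iio i), β < (bctSeq κ B j.1).1 then (bctSeq κ B h.choose.1).2 β
      else false with hs_def
    have hd : d < κ.ord := by
      apply Ordinal.bsup_lt_ord
      · rw [hreg.cof_eq]
        exact Cardinal.lt_ord.mp hi
      · exact fun j hj => (IH j hj (hj.trans hi)).1
    have hdj : ∀ j, j < i → (bctSeq κ B j).1 ≤ d := fun j hj =>
      Ordinal.le_bsup (fun j (_ : j < i) => (bctSeq κ B j).1) j hj
    have hcoh : ∀ j, j < i → ∀ β, β < (bctSeq κ B j).1 → s β = (bctSeq κ B j).2 β := by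
      intro j hj β hβ
      have hex : ∃ jj : ↥(Set.Iio i), β < (bctSeq κ B jj.1).1 := ⟨⟨j, hj⟩, hβ⟩
      rw [hs_def]
      simp only [dif_pos hex]
      have hj0 : hex.choose.1 < i := hex.choose.2
      have hβ0 : β < (bctSeq κ B hex.choose.1).1 := hex.choose_spec
      rcases lt_trichotomy hex.choose.1 j with hlt | heq | hgt
      · exact (((IH j hj (hj.trans hi)).2.2.1 hex.choose.1 hlt).2 β hβ0).symm
      · rw [heq]
      · exact ((IH hex.choose.1 hj0 (hj0.trans hi)).2.2.1 j hgt).2 β hβ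
    have hk := kill_spec (hB ⟨i, hi⟩) hd s
    have hrw : bctSeq κ B i =
        (max (kill κ (B ⟨i, hi⟩) d s).1 (i + 1), (kill κ (B ⟨i, hi⟩) d s).2) := by
      rw [bctSeq_eq, bctF]
      simp only [hd_def, hs_def]
      rw [dif_pos hi]
    constructor
    · rw [hrw]
      exact max_lt hk.2.1 (succ_lt_kord hunc hi)
    constructor
    · rw [hrw]
      exact lt_of_lt_of_le (ord_lt_add_one i) (le_max_right _ _)
    constructor
    · intro j hj
      constructor
      · rw [hrw]
        exact le_trans (le_trans (hdj j hj) hk.1) (le_max_left _ _)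
      · intro β hβ
        rw [hrw]
        have hβd : β < d := lt_of_lt_of_le hβ (hdj j hj)
        rw [hk.2.2.1 β hβd]
        exact hcoh j hj β hβ
    · intro hi'
      rw [hrw]
      apply Set.eq_empty_of_subset_empty
      refine le_trans (Set.inter_subset_inter_left _ (cyl_mono (le_max_left _ _) _)) ?_
      rw [hk.2.2.2]

lemma not_meager_univ (hreg : κ.IsRegular) (hunc : Cardinal.aleph0 < κ) :
    ¬ IsKMeager κ (Set.univ : Set (GenCantor κ)) := by
  rintro ⟨B, hB, hU⟩
  set x : GenCantor κ := fun β => (bctSeq κ B (β.1 + 1)).2 β.1 with hx_def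
  have hnot : ∀ i : Idx κ, x ∉ B i := by
    intro i
    have hinv := bct_inv hreg hunc hB
    have hxc : x ∈ cyl κ (bctSeq κ B i.1).1 (bctSeq κ B i.1).2 := by
      intro β hβ
      have hβs : β.1 + 1 < κ.ord := succ_lt_kord hunc β.2
      show (bctSeq κ B (β.1 + 1)).2 β.1 = (bctSeq κ B i.1).2 β.1
      rcases lt_trichotomy (β.1 + 1) i.1 with hlt | heq | hgt
      · have hβlen : β.1 < (bctSeq κ B (β.1 + 1)).1 :=
          lt_trans (ord_lt_add_one β.1) (hinv (β.1 + 1) hβs).2.1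
        exact (((hinv i.1 i.2).2.2.1 (β.1 + 1) hlt).2 β.1 hβlen).symm
      · rw [heq]
      · exact ((hinv (β.1 + 1) hβs).2.2.1 i.1 hgt).2 β.1 hβ
    have hdisj := (hinv i.1 i.2).2.2.2 i.2
    intro hxB
    have : x ∈ cyl κ (bctSeq κ B i.1).1 (bctSeq κ B i.1).2 ∩ B ⟨i.1, i.2⟩ :=
      ⟨hxc, by rwa [Subtype.coe_eta]⟩
    rw [hdisj] at this
    exact this
  have : x ∈ ⋃ i, B i := by rw [← hU]; trivial
  obtain ⟨i, hi⟩ := Set.mem_iUnion.mp this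
  exact hnot i hi
/-- If some level of the tree `2^{<κ}` has more than `κ` nodes, then `2^κ` can be
covered by `κ⁺` many nowhere dense sets. -/
lemma covM_le_of_big (hreg : κ.IsRegular) (hunc : Cardinal.aleph0 < κ)
    (hbig : ∃ δ : Idx κ, Cardinal.lift.{1} κ < #(↥(Set.Iio δ.1) → Bool)) :
    covM κ ≤ Order.succ (Cardinal.lift.{1} κ) := by
  classical
  obtain ⟨δ₀, hδ₀big⟩ := hbig
  have hδ₀pos : (0 : Ordinal) < δ₀.1 := by
    by_contra h
    rw [not_lt, nonpos_iff_eq_zero] at h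
    have : IsEmpty ↥(Set.Iio δ₀.1) :=
      ⟨fun x => not_lt_zero' (show x.1 < (0 : Ordinal) by rw [← h]; exact x.2)⟩
    have h1 : #(↥(Set.Iio δ₀.1) → Bool) = 1 := Cardinal.mk_eq_one _
    rw [h1] at hδ₀big
    exact absurd hδ₀big (not_lt.mpr (le_trans Cardinal.one_le_aleph0 (aleph0_le_lift_k hunc)))
  -- the family of nowhere dense sets omitting a word
  set R := ↥(Set.Iio δ₀.1) → Bool with hR
  -- `x` realizes the word `r` in its `α`-th block
  set BlockEq : GenCantor κ → Ordinal → R → Prop :=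
    fun x α r => ∀ (j : ↥(Set.Iio δ₀.1)) (h : δ₀.1 * α + j.1 < κ.ord), x ⟨_, h⟩ = r j
    with hBlockEq
  set Nr : R → Set (GenCantor κ) := fun r => {x | ∀ α < κ.ord, ¬ BlockEq x α r} with hNr
  have hNnwd : ∀ r, IsNwd κ (Nr r) := by
    intro r δ hδ σ
    have hblock_lt : δ₀.1 * δ + δ₀.1 < κ.ord :=
      add_lt_kord hunc (mul_lt_kord hunc δ₀.2 hδ) δ₀.2
    have hδle : δ ≤ δ₀.1 * δ := Ordinal.le_mul_right δ hδ₀pos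
    refine ⟨δ₀.1 * δ + δ₀.1, le_trans hδle (le_self_add), hblock_lt,
      fun β => if h : δ₀.1 * δ ≤ β ∧ β < δ₀.1 * δ + δ₀.1 then
        r ⟨β - δ₀.1 * δ, Ordinal.sub_lt_of_lt_add h.2 hδ₀pos⟩ else σ β, ?_, ?_⟩
    · intro β hβ
      dsimp only
      rw [dif_neg]
      rintro ⟨h1, _⟩
      exact absurd (lt_of_lt_of_le hβ hδle) (not_lt.mpr h1)
    · ext x
      simp only [Set.mem_inter_iff, Set.mem_empty_iff_false, iff_false, not_and]
      intro hx hxN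
      apply hxN δ hδ
      intro j h
      have hlt : δ₀.1 * δ + j.1 < δ₀.1 * δ + δ₀.1 := by
        exact (add_lt_add_iff_left _).mpr j.2
      have := hx ⟨δ₀.1 * δ + j.1, h⟩ hlt
      rw [this]
      dsimp only
      rw [dif_pos ⟨le_self_add, hlt⟩]
      congr 1
      exact Subtype.ext (Ordinal.add_sub_cancel _ _)
  -- every `x` omits some word among any `κ⁺` many
  obtain ⟨S, hS⟩ : ∃ S : Set R, #S = Order.succ (Cardinal.lift.{1} κ) := by
    apply Cardinal.le_mk_iff_exists_set.mp
    rwa [Order.succ_le_iff]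
  have hcover : ∀ x : GenCantor κ, ∃ r : ↥S, x ∈ Nr r.1 := by
    intro x
    by_contra h
    push_neg at h
    have h' : ∀ r : ↥S, ∃ α, α < κ.ord ∧ BlockEq x α r.1 := by
      intro r
      have := h r
      rw [hNr] at this
      simp only [Set.mem_setOf_eq, not_forall] at this
      obtain ⟨α, hα, hbe⟩ := this
      exact ⟨α, hα, not_not.mp hbe⟩
    choose ψ hψ1 hψ2 using h'
    have hinj : Function.Injective (fun r : ↥S => (⟨ψ r, hψ1 r⟩ : Idx κ)) := by
      intro r r' heq
      replace heq : ψ r = ψ r' := congrArg Subtype.val heq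
      apply Subtype.ext
      funext j
      have h1 := hψ2 r j
      have h2 := hψ2 r' j
      rw [heq] at h1
      have hpos : δ₀.1 * ψ r' + j.1 < κ.ord :=
        add_lt_kord hunc (mul_lt_kord hunc δ₀.2 (hψ1 r')) (lt_trans j.2 δ₀.2)
      rw [← h1 hpos, h2 hpos]
    have hle : #(↥S) ≤ #(Idx κ) := Cardinal.mk_le_of_injective hinj
    rw [hS, mk_idx] at hle
    exact absurd hle (not_le.mpr (Order.lt_succ _))
  -- assemble the covering family
  set G : Set (Set (GenCantor κ)) := Set.range (fun r : ↥S => Nr r.1) with hG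
  have h1 : covM κ ≤ #G := by
    apply csInf_le (OrderBot.bddBelow _)
    refine ⟨G, ?_, ?_, rfl⟩
    · rintro A ⟨r, rfl⟩
      exact nwd_meager hunc (hNnwd r.1)
    · apply Set.eq_univ_of_forall
      intro x
      obtain ⟨r, hr⟩ := hcover x
      exact ⟨Nr r.1, ⟨r, rfl⟩, hr⟩
  refine le_trans h1 (le_trans Cardinal.mk_range_le ?_)
  rw [hS]
/-- Enumeration of (more than) all bounded conditions paired with indices, with the
property that extensions with arbitrarily large index exist. -/
lemma exists_enum (hunc : Cardinal.aleph0 < κ)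
    (hsmall : ∀ δ : Idx κ, #(↥(Set.Iio δ.1) → Bool) ≤ Cardinal.lift.{1} κ) :
    ∃ e : Idx κ → Idx κ × (Ordinal → Bool) × Idx κ,
      ∀ (δ : Idx κ) (σ : Ordinal → Bool) (i ξ : Idx κ), ∃ η, ξ ≤ η ∧ (e η).2.2 = i ∧
        δ.1 ≤ (e η).1.1 ∧ ∀ β < δ.1, (e η).2.1 β = σ β := by
  classical
  set Cond := (δ : Idx κ) × ((↥(Set.Iio δ.1) → Bool) × Idx κ) with hCond
  have hmk : #Cond ≤ #(Idx κ) := by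
    rw [hCond, Cardinal.mk_sigma, mk_idx]
    have hone : ∀ δ : Idx κ, #((↥(Set.Iio δ.1) → Bool) × Idx κ) ≤ Cardinal.lift.{1} κ := by
      intro δ
      rw [Cardinal.mk_prod, Cardinal.lift_id, Cardinal.lift_id, mk_idx]
      calc #(↥(Set.Iio δ.1) → Bool) * Cardinal.lift.{1} κ
          ≤ Cardinal.lift.{1} κ * Cardinal.lift.{1} κ :=
            mul_le_mul_left (hsmall δ) _
        _ = Cardinal.lift.{1} κ := Cardinal.mul_eq_self (aleph0_le_lift_k hunc)
    calc Cardinal.sum (fun δ : Idx κ => #((↥(Set.Iio δ.1) → Bool) × Idx κ))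
        ≤ Cardinal.sum (fun _ : Idx κ => Cardinal.lift.{1} κ) := Cardinal.sum_le_sum _ _ hone
      _ = #(Idx κ) * Cardinal.lift.{1} κ := Cardinal.sum_const' _ _
      _ = Cardinal.lift.{1} κ := by
          rw [mk_idx]; exact Cardinal.mul_eq_self (aleph0_le_lift_k hunc)
  obtain ⟨ι⟩ : Nonempty (Cond ↪ Idx κ) := by rw [← Cardinal.le_def]; exact hmk
  have hCne : Nonempty Cond :=
    ⟨⟨⟨0, zero_lt_kord hunc⟩, fun j => (not_lt_zero' (show j.1 < (0 : Ordinal) from j.2)).elim,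
      ⟨0, zero_lt_kord hunc⟩⟩⟩
  set conv : Cond → Idx κ × (Ordinal → Bool) × Idx κ := fun c =>
    ⟨c.1, fun β => if h : β < c.1.1 then c.2.1 ⟨β, h⟩ else false, c.2.2⟩ with hconv
  refine ⟨fun η => conv (Function.invFun ι η), ?_⟩
  intro δ σ i ξ
  -- the `γ`-indexed family of extensions of `(δ, σ)` of length `δ + γ + 1`
  have hlen : ∀ γ : Idx κ, δ.1 + γ.1 + 1 < κ.ord := fun γ =>
    succ_lt_kord hunc (add_lt_kord hunc δ.2 γ.2)
  set K : Idx κ → Cond := fun γ =>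
    ⟨⟨δ.1 + γ.1 + 1, hlen γ⟩, fun j => if h : j.1 < δ.1 then σ j.1 else false, i⟩ with hK
  have hKinj : Function.Injective K := by
    intro γ γ' heq
    have h1 : δ.1 + γ.1 + 1 = δ.1 + γ'.1 + 1 := congrArg (fun c : Cond => c.1.1) heq
    rw [Ordinal.add_one_eq_succ, Ordinal.add_one_eq_succ] at h1
    have h2 := Order.succ_injective h1
    exact Subtype.ext ((add_right_inj δ.1).mp h2)
  have hunbd : ∃ γ : Idx κ, ξ ≤ ι (K γ) := by
    by_contra h
    push_neg at h
    have hemb : Function.Injective (fun γ : Idx κ => (⟨(ι (K γ)).1,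
        (h γ : ι (K γ) < ξ)⟩ : ↥(Set.Iio ξ.1))) := by
      intro γ γ' heq
      replace heq := congrArg Subtype.val heq
      exact hKinj (ι.injective (Subtype.ext heq))
    have hle : #(Idx κ) ≤ #(↥(Set.Iio ξ.1)) := Cardinal.mk_le_of_injective hemb
    rw [mk_idx, Ordinal.mk_Iio_ordinal, Cardinal.lift_le] at hle
    exact absurd hle (not_le.mpr (Cardinal.lt_ord.mp ξ.2))
  obtain ⟨γ, hγ⟩ := hunbd
  refine ⟨ι (K γ), hγ, ?_⟩
  have hinv : Function.invFun ι (ι (K γ)) = K γ :=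
    Function.leftInverse_invFun ι.injective (K γ)
  dsimp only
  rw [hinv]
  refine ⟨rfl, ?_, ?_⟩
  · show δ.1 ≤ δ.1 + γ.1 + 1
    rw [add_assoc]
    exact le_self_add
  · intro β hβ
    have hβ' : β < δ.1 + γ.1 + 1 := lt_of_lt_of_le hβ
      (by rw [add_assoc]; exact le_self_add)
    show (if h : β < δ.1 + γ.1 + 1 then (if h' : β < δ.1 then σ β else false) else false) = σ β
    rw [dif_pos hβ']
    exact dif_pos hβ
/-- The merge of a bounded condition with `z` above it. -/
noncomputable def merge (κ : Cardinal.{0}) (δ₀ : Ordinal) (σ₀ : Ordinal → Bool) (z : GenCantor κ) :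
    Ordinal → Bool :=
  fun β => if β < δ₀ then σ₀ β else if h : β < κ.ord then z ⟨β, h⟩ else false

/-- The set of `z` such that some initial part of `z` above the condition `(δ₀, σ₀)`
together with the condition itself gives a cylinder missing `N`. -/
def PiercesAt (κ : Cardinal.{0}) (δ₀ : Ordinal) (σ₀ : Ordinal → Bool)
    (N : Set (GenCantor κ)) : Set (GenCantor κ) :=
  {z | ∃ q, δ₀ ≤ q ∧ q < κ.ord ∧ cyl κ q (merge κ δ₀ σ₀ z) ∩ N = ∅}

lemma nwd_compl_piercesAt (hunc : Cardinal.aleph0 < κ) {δ₀ : Ordinal} (hδ₀ : δ₀ < κ.ord)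
    (σ₀ : Ordinal → Bool) {N : Set (GenCantor κ)} (hN : IsNwd κ N) :
    IsNwd κ (PiercesAt κ δ₀ σ₀ N)ᶜ := by
  intro δ hδ σ
  have hγ' : max δ δ₀ < κ.ord := max_lt hδ hδ₀
  obtain ⟨q', h1, h2, ν, hν, hkill⟩ :=
    hN (max δ δ₀) hγ' (fun β => if β < δ₀ then σ₀ β else σ β)
  refine ⟨q', le_trans (le_max_left _ _) h1, h2,
    fun β => if β < δ then σ β else ν β, fun β hβ => if_pos hβ, ?_⟩
  apply Set.eq_empty_of_subset_empty
  rintro z ⟨hzc, hzn⟩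
  exfalso
  apply hzn
  refine ⟨q', le_trans (le_max_right _ _) h1, h2, ?_⟩
  have hagree : ∀ β < q', merge κ δ₀ σ₀ z β = ν β := by
    intro β hβ
    by_cases hβδ₀ : β < δ₀
    · rw [merge, if_pos hβδ₀, hν β (lt_of_lt_of_le hβδ₀ (le_max_right _ _)), if_pos hβδ₀]
    · have hβκ : β < κ.ord := lt_trans hβ h2
      rw [merge, if_neg hβδ₀, dif_pos hβκ]
      have hz := hzc ⟨β, hβκ⟩ hβ
      dsimp only at hz
      by_cases hβδ : β < δ
      · rw [hz, if_pos hβδ, hν β (lt_of_lt_of_le hβδ (le_max_left _ _)), if_neg hβδ₀]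
      · rw [hz, if_neg hβδ]
  rw [cyl_congr hagree]
  exact hkill
/-- The main construction: assuming all levels of `2^{<κ}` have at most `κ` nodes,
the union of fewer than `min (bK κ) (covM κ)` many `κ`-meager sets is `κ`-meager. -/
lemma meager_sUnion_of_small_levels (hreg : κ.IsRegular) (hunc : Cardinal.aleph0 < κ)
    (hsmall : ∀ δ : Idx κ, #(↥(Set.Iio δ.1) → Bool) ≤ Cardinal.lift.{1} κ)
    {J : Set (Set (GenCantor κ))} (hJ : ∀ A ∈ J, IsKMeager κ A)
    (hb : #J < bK κ) (hc : #J < covM κ) : IsKMeager κ (⋃₀ J) := by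
  classical
  obtain ⟨e, he⟩ := exists_enum hunc hsmall
  have hJ' : ∀ s : ↥J, IsKMeager κ s.1 := fun s => hJ s.1 s.2
  choose N hNnwd hNeq using hJ'
  -- a point piercing every nowhere dense piece over every enumerated condition
  have hzex : ∃ z : GenCantor κ, ∀ (s : ↥J) (η : Idx κ),
      z ∈ PiercesAt κ (e η).1.1 (e η).2.1 (N s (e η).2.2) := by
    by_contra h
    push_neg at h
    set M : ↥J → Set (GenCantor κ) := fun s =>
      ⋃ η : Idx κ, (PiercesAt κ (e η).1.1 (e η).2.1 (N s (e η).2.2))ᶜ with hM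
    have h1 : covM κ ≤ #(Set.range M) := by
      apply csInf_le (OrderBot.bddBelow _)
      refine ⟨Set.range M, ?_, ?_, rfl⟩
      · rintro A ⟨s, rfl⟩
        exact ⟨fun η => (PiercesAt κ (e η).1.1 (e η).2.1 (N s (e η).2.2))ᶜ,
          fun η => nwd_compl_piercesAt hunc (e η).1.2 _ (hNnwd s (e η).2.2), rfl⟩
      · apply Set.eq_univ_of_forall
        intro z
        obtain ⟨s, η, hzη⟩ := h z
        exact ⟨M s, ⟨s, rfl⟩, Set.mem_iUnion.mpr ⟨η, hzη⟩⟩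
    have h2 : #(Set.range M) ≤ #J := Cardinal.mk_range_le
    exact absurd (lt_of_le_of_lt (le_trans h1 h2) hc) (lt_irrefl _)
  obtain ⟨z, hz⟩ := hzex
  choose q hq1 hq2 hq3 using hz
  set f : ↥J → GenBaire κ := fun s η => ⟨q s η, hq2 s η⟩ with hf
  have hgex : ∃ g : GenBaire κ, ∀ s : ↥J, EvDom κ (f s) g := by
    by_contra h
    push_neg at h
    have h1 : bK κ ≤ #(Set.range f) := by
      apply csInf_le (OrderBot.bddBelow _)
      refine ⟨Set.range f, ?_, rfl⟩
      intro g
      obtain ⟨s, hs⟩ := h g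
      exact ⟨f s, ⟨s, rfl⟩, hs⟩
    have h2 : #(Set.range f) ≤ #J := Cardinal.mk_range_le
    exact absurd (lt_of_le_of_lt (le_trans h1 h2) hb) (lt_irrefl _)
  obtain ⟨g, hg⟩ := hgex
  set W : Idx κ → Ordinal := fun η => max (g η).1 (e η).1.1 with hW
  have hWlt : ∀ η, W η < κ.ord := fun η => max_lt (g η).2 (e η).1.2
  set E : Idx κ × Idx κ → Set (GenCantor κ) := fun p =>
    {y | ∀ η : Idx κ, p.1 ≤ η → (e η).2.2 = p.2 →
      y ∉ cyl κ (W η) (merge κ (e η).1.1 (e η).2.1 z)} with hE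
  have hEnwd : ∀ p, IsNwd κ (E p) := by
    rintro ⟨ξ, i⟩ δ hδ σ
    obtain ⟨η, hη1, hη2, hη3, hη4⟩ := he ⟨δ, hδ⟩ σ i ξ
    refine ⟨W η, le_trans hη3 (le_max_right _ _), hWlt η,
      merge κ (e η).1.1 (e η).2.1 z, ?_, ?_⟩
    · intro β hβ
      rw [merge, if_pos (lt_of_lt_of_le hβ hη3)]
      exact hη4 β hβ
    · apply Set.eq_empty_of_subset_empty
      rintro y ⟨hyc, hyE⟩
      exact (hyE η hη1 hη2 hyc).elim
  apply meager_of_subset_iUnion hunc hEnwd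
  rintro y ⟨A, hAJ, hyA⟩
  set s : ↥J := ⟨A, hAJ⟩ with hs
  have hyU : y ∈ ⋃ i, N s i := by rw [← hNeq s]; exact hyA
  obtain ⟨i, hyi⟩ := Set.mem_iUnion.mp hyU
  by_contra hy
  rw [Set.mem_iUnion] at hy
  push_neg at hy
  obtain ⟨α, hα⟩ := hg s
  have hξ : (α.1 + 1) < κ.ord := succ_lt_kord hunc α.2
  have hyE := hy (⟨α.1 + 1, hξ⟩, i)
  rw [hE] at hyE
  simp only [Set.mem_setOf_eq] at hyE
  push_neg at hyE
  obtain ⟨η, hη1, hη2, hyc⟩ := hyE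
  have hαη : α < η :=
    lt_of_lt_of_le (Subtype.mk_lt_mk.mpr (ord_lt_add_one α.1)) hη1
  have hflt : q s η < (g η).1 := Subtype.coe_lt_coe.mpr (hα η hαη)
  have hqW : q s η ≤ W η := le_trans hflt.le (le_max_left _ _)
  have hymem : y ∈ cyl κ (q s η) (merge κ (e η).1.1 (e η).2.1 z) :=
    cyl_mono hqW _ hyc
  have hdisj := hq3 s η
  have hcontr : y ∈ cyl κ (q s η) (merge κ (e η).1.1 (e η).2.1 z) ∩ N s (e η).2.2 :=
    ⟨hymem, by rw [hη2]; exact hyi⟩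
  rw [hdisj] at hcontr
  exact hcontr
end Helpers

theorem min_le_addM (κ : Cardinal.{0})
    (hreg : κ.IsRegular) (hunc : Cardinal.aleph0 < κ) :
    min (bK κ) (covM κ) ≤ addM κ := by
  classical
  unfold addM
  apply le_csInf
  · refine ⟨#({A : Set (GenCantor κ) | IsKMeager κ A}),
      {A : Set (GenCantor κ) | IsKMeager κ A}, fun A hA => hA, ?_, rfl⟩
    intro hmeager
    have huniv : ⋃₀ {A : Set (GenCantor κ) | IsKMeager κ A} = Set.univ := by
      apply Set.eq_univ_of_forall
      intro x
      exact ⟨{x}, nwd_meager hunc (nwd_singleton hunc x), rfl⟩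
    rw [huniv] at hmeager
    exact not_meager_univ hreg hunc hmeager
  · rintro c ⟨J, hJ, hnm, rfl⟩
    by_contra hlt
    push_neg at hlt
    have hb : #J < bK κ := lt_of_lt_of_le hlt (min_le_left _ _)
    have hc : #J < covM κ := lt_of_lt_of_le hlt (min_le_right _ _)
    apply hnm
    by_cases hsmall : ∀ δ : Idx κ, #(↥(Set.Iio δ.1) → Bool) ≤ Cardinal.lift.{1} κ
    · exact meager_sUnion_of_small_levels hreg hunc hsmall hJ hb hc
    · push_neg at hsmall
      have h1 := covM_le_of_big hreg hunc hsmall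
      have h2 : #J ≤ Cardinal.lift.{1} κ := Order.lt_succ_iff.mp (lt_of_lt_of_le hc h1)
      exact meager_sUnion_small hunc hJ h2

end GenCichon
end
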